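/- arXiv:2410.19505 — 3 statements merged into one kernel-verified Lean document; each statement's English description precedes it below -/
import Mathlib

section
/- Every well-configured C-datum is rigid. (This is the combinatorial form of the paper's proposition: every well-configured C-pair is a basic τ_d-rigid pair.) -/
open scoped Classical

/-- The numerical setup under which the truncated linear Nakayama algebra `Λ(n,l)`
admits a `d`-cluster tilting subcategory, together with the integers `s i`
(defined by `2 * s i = …`). -/
structure NakSetup where
  n : ℤ
  l : ℤ
  d : ℤ
  p : ℤ
  s : ℤ → ℤ
  hl : 2 ≤ l
  hd : 2 ≤ d
  hp : 1 ≤ p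
  hn : 2 * n = (p - 1) * ((d - 1) * l + 2) + l
  hcase : l = 2 ∨ (2 < l ∧ Even d ∧ Even p)
  hs_odd : ∀ i, 1 ≤ i → i ≤ p → Odd i → 2 * s i = (i - 1) * (d - 1) * l + 2 * i
  hs_even : ∀ i, 1 ≤ i → i ≤ p → Even i → 2 * s i = (i - 1) * ((d - 1) * l + 2) + l

/-- A `C`-datum: subsets `X i ⊆ [1, l-1]` for `2 ≤ i ≤ p` (empty outside this range)
together with disjoint subsets `R, B ⊆ [1, n]`. -/
structure CDatum (S : NakSetup) where
  X : ℤ → Finset ℤ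
  R : Finset ℤ
  B : Finset ℤ
  hX : ∀ i, X i ⊆ Finset.Icc 1 (S.l - 1)
  hXout : ∀ i, ¬(2 ≤ i ∧ i ≤ S.p) → X i = ∅
  hR : R ⊆ Finset.Icc 1 S.n
  hB : B ⊆ Finset.Icc 1 S.n
  hRB : Disjoint R B

namespace CDatum

variable {S : NakSetup}

/-- `m i = |X i|` (as an integer). -/
noncomputable def m (D : CDatum S) (i : ℤ) : ℤ := (D.X i).card

/-- `l_i`: the minimum of `X i`, or `l` if `X i = ∅`. -/
noncomputable def lo (D : CDatum S) (i : ℤ) : ℤ :=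
  if h : (D.X i).Nonempty then (D.X i).min' h else S.l

/-- `n_i`: the maximum of `X i`, or `0` if `X i = ∅`. -/
noncomputable def hi (D : CDatum S) (i : ℤ) : ℤ :=
  if h : (D.X i).Nonempty then (D.X i).max' h else 0

/-- The interval `𝖡_i`. -/
noncomputable def BI (D : CDatum S) (i : ℤ) : Finset ℤ :=
  if Odd i then Finset.Icc (S.s i) (S.s i + D.hi i - 1)
  else Finset.Icc (S.s i - D.hi i + 1) (S.s i)

/-- The interval `𝖱_i`. -/
noncomputable def RI (D : CDatum S) (i : ℤ) : Finset ℤ :=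
  if Odd i then Finset.Icc (S.s (i - 1) - (S.l - D.lo i) + 1) (S.s (i - 1))
  else Finset.Icc (S.s (i - 1)) (S.s (i - 1) + (S.l - D.lo i) - 1)

/-- A `C`-datum is rigid (the combinatorial form of being a `τ_d`-rigid pair). -/
def Rigid (D : CDatum S) : Prop :=
  (∀ x ∈ D.B, ∀ y ∈ D.R, x < y →
      ∃ z, x < z ∧ z + S.l - 2 < y ∧ Finset.Icc z (z + S.l - 2) ∩ (D.R ∪ D.B) = ∅) ∧
  (∀ i, 2 ≤ i → i ≤ S.p → Odd i →
      D.hi (i - 1) + D.hi i ≤ S.l - 1 ∧ S.l + 1 ≤ D.lo i + D.lo (i + 1) ∧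
      (S.d = 2 → D.hi i ≤ D.lo (i + 2) + 1 ∧ D.hi (i - 2) ≤ D.lo i + 1)) ∧
  (∀ i, 2 ≤ i → i ≤ S.p → Even i →
      D.hi i + D.hi (i + 1) ≤ S.l - 1 ∧ S.l + 1 ≤ D.lo (i - 1) + D.lo i) ∧
  (∀ i, 2 ≤ i → i ≤ S.p → D.R ∩ D.RI i = ∅ ∧ D.B ∩ D.BI i = ∅)

/-- The left endpoint of `Ξ(i, i+k)` (the left endpoint of `𝖱_i`). -/
noncomputable def xiLo (D : CDatum S) (i : ℤ) : ℤ :=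
  if Odd i then S.s (i - 1) - (S.l - D.lo i) + 1 else S.s (i - 1)

/-- The right endpoint of `Ξ(i, i+k)`, depending on `j = i + k`
(the right endpoint of `𝖡_{i+k}`). -/
noncomputable def xiHi (D : CDatum S) (j : ℤ) : ℤ :=
  if Even j then S.s j else S.s j + D.hi j - 1

/-- The interval `Ξ(i, i+k)`. -/
noncomputable def Xi (D : CDatum S) (i k : ℤ) : Finset ℤ :=
  Finset.Icc (D.xiLo i) (D.xiHi (i + k))

/-- The union `𝖡_2 ∪ … ∪ 𝖡_p`. -/
noncomputable def BigB (D : CDatum S) : Finset ℤ :=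
  (Finset.Icc 2 S.p).biUnion fun i => D.BI i

/-- The union `𝖱_2 ∪ … ∪ 𝖱_p`. -/
noncomputable def BigR (D : CDatum S) : Finset ℤ :=
  (Finset.Icc 2 S.p).biUnion fun i => D.RI i

/-- The interval `I` is support. -/
def IsSupport (D : CDatum S) (I : Finset ℤ) : Prop :=
  D.R ∩ I = ∅ ∧ D.B ∩ I = I \ D.BigB

/-- The interval `I` is rigid. -/
def IsRigidI (D : CDatum S) (I : Finset ℤ) : Prop :=
  D.B ∩ I = ∅ ∧ D.R ∩ I = I \ D.BigR

/-- The interval `I` is support to rigid at `x ∈ I`. -/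
def IsSuppToRigid (D : CDatum S) (I : Finset ℤ) (x : ℤ) : Prop :=
  x ∈ I ∧ D.B ∩ I = {y ∈ I | y ≤ x} ∧ (D.B ∩ I).Nonempty ∧
    D.R ∩ I = {y ∈ I | x + S.l ≤ y} ∧ (D.R ∩ I).Nonempty

/-- The interval `I` is rigid to support at `x ∈ I`. -/
def IsRigidToSupp (D : CDatum S) (I : Finset ℤ) (x : ℤ) : Prop :=
  x ∈ I ∧ D.R ∩ I = {y ∈ I | y ≤ x} ∧ (D.R ∩ I).Nonempty ∧
    D.B ∩ I = {y ∈ I | x + 1 ≤ y} ∧ (D.B ∩ I).Nonempty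

/-- `(X_i, …, X_{i+k})` is an admissible configuration (types (I)–(VIII)). -/
def Admissible (D : CDatum S) (i k : ℤ) : Prop :=
  2 ≤ i ∧ i + k ≤ S.p ∧ 0 ≤ k ∧
  (∀ j, 0 ≤ j → j ≤ k → (D.X (i + j)).Nonempty) ∧
  ((k = 0 ∧ D.lo i = 1 ∧ D.hi i < S.l - 1 ∧ D.IsSupport (D.Xi i k)) ∨
   (k = 0 ∧ 1 < D.lo i ∧ D.hi i = S.l - 1 ∧ D.IsRigidI (D.Xi i k)) ∨
   (k = 0 ∧ D.lo i = 1 ∧ D.hi i = S.l - 1 ∧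
     (D.IsSupport (D.Xi i k) ∨ D.IsRigidI (D.Xi i k) ∨
       ∃ x ∈ D.Xi i k \ D.BI i, D.IsSuppToRigid (D.Xi i k) x)) ∨
   (k = 1 ∧ Odd i ∧ D.hi i = S.l - 1 ∧ D.hi (i + 1) = S.l - 1 ∧
     D.m i + D.m (i + 1) < S.l - 1 ∧ D.IsRigidI (D.Xi i k)) ∨
   (k = 1 ∧ Even i ∧ D.lo i = 1 ∧ D.lo (i + 1) = 1 ∧
     D.m i + D.m (i + 1) < S.l - 1 ∧ D.IsSupport (D.Xi i k)) ∨
   (k = 1 ∧ Odd i ∧ D.hi i = S.l - 1 ∧ D.hi (i + 1) = S.l - 1 ∧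
     D.m i + D.m (i + 1) = S.l - 1 ∧
     (D.IsRigidI (D.Xi i k) ∨
       ∃ x ∈ Finset.Icc (S.s i - (S.l - D.m (i + 1))) (S.s i - 1),
         D.IsSuppToRigid (D.Xi i k) x)) ∨
   (k = 1 ∧ Even i ∧ D.lo i = 1 ∧ D.lo (i + 1) = 1 ∧
     D.m i + D.m (i + 1) = S.l - 1 ∧
     (D.IsSupport (D.Xi i k) ∨
       ∃ x ∈ Finset.Icc (S.s i - (S.l - 1)) (S.s i - D.m i),
         D.IsSuppToRigid (D.Xi i k) x)) ∨
   (k = 2 ∧ S.d = 2 ∧ Even i ∧ D.lo i = 1 ∧ D.lo (i + 1) = S.l - D.lo (i + 2) + 1 ∧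
     D.hi (i + 1) = S.l - D.hi i - 1 ∧ D.hi (i + 2) = S.l - 1 ∧
     ∃ x ∈ Finset.Icc (S.s (i + 1) - D.lo (i + 2)) (S.s i - D.hi i),
       D.IsSuppToRigid (D.Xi i k) x))

/-- The configuration on `[i, i+k]` is full: `m_{i+j} = n_{i+j} - l_{i+j} + 1`. -/
def Full (D : CDatum S) (i k : ℤ) : Prop :=
  ∀ j, 0 ≤ j → j ≤ k → D.m (i + j) = D.hi (i + j) - D.lo (i + j) + 1

/-- `[a, b]` is a maximal run of indices with `X` nonempty
(an interval of the diagonal partition). -/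
def IsBlock (D : CDatum S) (a b : ℤ) : Prop :=
  2 ≤ a ∧ b ≤ S.p ∧ a ≤ b ∧ (∀ j, a ≤ j → j ≤ b → (D.X j).Nonempty) ∧
    D.X (a - 1) = ∅ ∧ D.X (b + 1) = ∅

/-- `[a, b]` is the first interval of the diagonal partition. -/
def FirstBlock (D : CDatum S) (a b : ℤ) : Prop :=
  D.IsBlock a b ∧ ∀ j, j < a → D.X j = ∅

/-- `[a, b]` is the last interval of the diagonal partition. -/
def LastBlock (D : CDatum S) (a b : ℤ) : Prop :=
  D.IsBlock a b ∧ ∀ j, b < j → D.X j = ∅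

/-- `[a, b]` and `[a', b']` are consecutive intervals of the diagonal partition. -/
def ConsecBlocks (D : CDatum S) (a b a' b' : ℤ) : Prop :=
  D.IsBlock a b ∧ D.IsBlock a' b' ∧ b < a' ∧ ∀ j, b < j → j < a' → D.X j = ∅

/-- The diagonal component `T = {i ∈ [2, p] : X i ≠ ∅}`. -/
noncomputable def T (D : CDatum S) : Finset ℤ :=
  {i ∈ Finset.Icc 2 S.p | (D.X i).Nonempty}

/-- The configuration on the block `[a, b]` is full admissible of type (III). -/
def FullType3 (D : CDatum S) (a b : ℤ) : Prop :=
  a = b ∧ D.lo a = 1 ∧ D.hi a = S.l - 1 ∧ D.m a = S.l - 1 ∧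
    (D.IsSupport (D.Xi a 0) ∨ D.IsRigidI (D.Xi a 0) ∨
      ∃ x ∈ D.Xi a 0 \ D.BI a, D.IsSuppToRigid (D.Xi a 0) x)

/-- A `Θ`-interval is rigid, support, or rigid to support. -/
def GoodTheta (D : CDatum S) (I : Finset ℤ) : Prop :=
  D.IsRigidI I ∨ D.IsSupport I ∨ ∃ x, D.IsRigidToSupp I x

/-- A `C`-datum is well-configured. -/
def WellConfigured (D : CDatum S) : Prop :=
  (D.T = ∅ ∧ ∃ x, 0 ≤ x ∧ x ≤ S.n ∧ D.R = Finset.Icc 1 x ∧ D.B = Finset.Icc (x + 1) S.n) ∨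
  (D.T.Nonempty ∧
    (∀ a b, D.IsBlock a b → D.Admissible a (b - a) ∧ D.Full a (b - a)) ∧
    (∀ a b a' b', D.ConsecBlocks a b a' b' →
      D.Xi a (b - a) ∩ D.Xi a' (b' - a') = ∅) ∧
    (∀ a b, D.FirstBlock a b → D.GoodTheta (Finset.Icc 1 (D.xiLo a - 1))) ∧
    (∀ a b a' b', D.ConsecBlocks a b a' b' →
      D.GoodTheta (Finset.Icc (D.xiHi b + 1) (D.xiLo a' - 1))) ∧
    (∀ a b, D.LastBlock a b → D.GoodTheta (Finset.Icc (D.xiHi b + 1) S.n)) ∧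
    (∀ a b, D.FirstBlock a b → D.IsRigidI (D.Xi a (b - a)) →
      D.IsRigidI (Finset.Icc 1 (D.xiLo a - 1)) ∨ D.FullType3 a b) ∧
    (∀ a b a' b', D.ConsecBlocks a b a' b' → D.IsRigidI (D.Xi a' (b' - a')) →
      D.IsRigidI (Finset.Icc (D.xiHi b + 1) (D.xiLo a' - 1)) ∨ D.FullType3 a' b') ∧
    (∀ a b a' b', D.ConsecBlocks a b a' b' → D.IsSupport (D.Xi a (b - a)) →
      D.IsSupport (Finset.Icc (D.xiHi b + 1) (D.xiLo a' - 1)) ∨ D.FullType3 a b) ∧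
    (∀ a b, D.LastBlock a b → D.IsSupport (D.Xi a (b - a)) →
      D.IsSupport (Finset.Icc (D.xiHi b + 1) S.n) ∨ D.FullType3 a b))

/-- The summand count `|R| + |B| + Σ_{i=2}^p m_i`. -/
noncomputable def count (D : CDatum S) : ℤ :=
  (D.R.card : ℤ) + (D.B.card : ℤ) + ∑ i ∈ Finset.Icc 2 S.p, D.m i

end CDatum


namespace Aux10

open Finset

variable {S : NakSetup} {D : CDatum S}

/-! ### Generic set helpers -/

lemma inter_empty {A C : Finset ℤ} (h : A ∩ C = ∅) {x : ℤ} (hx : x ∈ A) (hx' : x ∈ C) :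
    False := by
  have : x ∈ A ∩ C := Finset.mem_inter.2 ⟨hx, hx'⟩
  simp [h] at this

lemma mem_of_eq {A C : Finset ℤ} (h : A = C) {x : ℤ} : x ∈ A ↔ x ∈ C := by rw [h]

/-! ### Arithmetic about `s` -/

lemma sdiff_even {i : ℤ} (h2 : 2 ≤ i) (hip : i ≤ S.p) (he : Even i) :
    2 * S.s i = 2 * S.s (i - 1) + S.d * S.l := by
  have ho : Odd (i - 1) := by
    rcases he with ⟨t, rfl⟩; exact ⟨t - 1, by ring⟩
  have h1 := S.hs_even i (by omega) hip he
  have h2' := S.hs_odd (i - 1) (by omega) (by omega) ho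
  linear_combination h1 - h2'

lemma sdiff_odd {i : ℤ} (h2 : 3 ≤ i) (hip : i ≤ S.p) (ho : Odd i) :
    2 * S.s i = 2 * S.s (i - 1) + (S.d - 2) * S.l + 4 := by
  have he : Even (i - 1) := by
    rcases ho with ⟨t, rfl⟩; exact ⟨t, by ring⟩
  have h1 := S.hs_odd i (by omega) hip ho
  have h2' := S.hs_even (i - 1) (by omega) (by omega) he
  linear_combination h1 - h2'

lemma dl_ge : 2 * S.l ≤ S.d * S.l := by
  have h1 := S.hd; have h2 := S.hl; nlinarith

lemma d2l_nonneg : 0 ≤ (S.d - 2) * S.l := by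
  have h1 := S.hd; have h2 := S.hl; nlinarith

/-- single step is at least 2 -/
lemma s_step {i : ℤ} (h2 : 2 ≤ i) (hip : i ≤ S.p) : S.s (i - 1) + 2 ≤ S.s i := by
  rcases Int.even_or_odd i with he | ho
  · have := sdiff_even h2 hip he
    have := dl_ge (S := S)
    have := S.hl
    omega
  · have := sdiff_odd (by
      rcases ho with ⟨t, rfl⟩
      omega) hip ho
    have := d2l_nonneg (S := S)
    omega

/-- step into an even index is at least l -/
lemma s_step_even {i : ℤ} (h2 : 2 ≤ i) (hip : i ≤ S.p) (he : Even i) :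
    S.s (i - 1) + S.l ≤ S.s i := by
  have := sdiff_even h2 hip he
  have := dl_ge (S := S)
  omega

lemma s_step_even_d2 (hd : S.d = 2) {i : ℤ} (h2 : 2 ≤ i) (hip : i ≤ S.p) (he : Even i) :
    S.s i = S.s (i - 1) + S.l := by
  have := sdiff_even h2 hip he
  rw [hd] at this
  omega

lemma s_le {i j : ℤ} (h1 : 1 ≤ i) (hij : i ≤ j) (hjp : j ≤ S.p) :
    S.s i + 2 * (j - i) ≤ S.s j := by
  have key : ∀ j, i ≤ j → (j ≤ S.p → S.s i + 2 * (j - i) ≤ S.s j) := by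
    refine Int.le_induction ?_ ?_
    · intro _; omega
    · intro n hn ih hnp
      have h1' := ih (by omega)
      have h2' := s_step (S := S) (i := n + 1) (by omega) (by omega)
      have e1 : n + 1 - 1 = n := by ring
      rw [e1] at h2'
      omega
  exact key j hij hjp

/-- jump after an odd index: at least l -/
lemma s_jump_odd {i j : ℤ} (h1 : 1 ≤ i) (ho : Odd i) (hij : i < j) (hjp : j ≤ S.p) :
    S.s i + S.l ≤ S.s j := by
  have he : Even (i + 1) := by rcases ho with ⟨t, rfl⟩; exact ⟨t + 1, by ring⟩
  have h2 := s_step_even (S := S) (i := i + 1) (by omega) (by omega) he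
  have h3 := s_le (S := S) (i := i + 1) (j := j) (by omega) (by omega) hjp
  have e1 : i + 1 - 1 = i := by ring
  rw [e1] at h2
  omega

/-- two steps: at least l + 2 -/
lemma s_two_steps {i j : ℤ} (h1 : 1 ≤ i) (hij : i + 2 ≤ j) (hjp : j ≤ S.p) :
    S.s i + S.l + 2 ≤ S.s j := by
  rcases Int.even_or_odd i with he | ho
  · -- i even, i+1 odd, i+2 even
    have he2 : Even (i + 2) := by rcases he with ⟨t, rfl⟩; exact ⟨t + 1, by ring⟩
    have h2 := s_step_even (S := S) (i := i + 2) (by omega) (by omega) he2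
    have h3 := s_step (S := S) (i := i + 1) (by omega) (by omega)
    have h4 := s_le (S := S) (i := i + 2) (j := j) (by omega) (by omega) hjp
    have e1 : i + 2 - 1 = i + 1 := by ring
    have e2 : i + 1 - 1 = i := by ring
    rw [e1] at h2
    rw [e2] at h3
    omega
  · have he : Even (i + 1) := by rcases ho with ⟨t, rfl⟩; exact ⟨t + 1, by ring⟩
    have h3 := s_le (S := S) (i := i + 1) (j := j) (by omega) (by omega) hjp
    have h2 := s_step_even (S := S) (i := i + 1) (by omega) (by omega) he
    have e2 : i + 1 - 1 = i := by ring
    rw [e2] at h2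
    omega

lemma s_one : S.s 1 = 1 := by
  have h := S.hs_odd 1 le_rfl S.hp ⟨0, by ring⟩
  have e : (1 - 1 : ℤ) * (S.d - 1) * S.l + 2 * 1 = 2 := by ring
  omega

lemma s_p : S.s S.p = S.n := by
  rcases Int.even_or_odd S.p with he | ho
  · have h := S.hs_even S.p S.hp le_rfl he
    have : 2 * S.s S.p = 2 * S.n := by linear_combination h - S.hn
    omega
  · have hl2 : S.l = 2 := by
      rcases S.hcase with h | ⟨_, _, hpe⟩
      · exact h
      · exact absurd hpe (by simp [Int.not_odd_iff_even.symm, ho])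
    have h := S.hs_odd S.p S.hp le_rfl ho
    have : 2 * S.s S.p = 2 * S.n := by linear_combination h - S.hn - hl2
    omega

lemma s_pos {i : ℤ} (h1 : 1 ≤ i) (hip : i ≤ S.p) : 1 ≤ S.s i := by
  have := s_le (S := S) (i := 1) (j := i) le_rfl h1 hip
  have := s_one (S := S)
  omega

lemma s_le_n {i : ℤ} (h1 : 1 ≤ i) (hip : i ≤ S.p) : S.s i ≤ S.n := by
  have := s_le (S := S) (i := i) (j := S.p) h1 hip le_rfl
  have := s_p (S := S)
  omega

/-! ### basic facts about lo / hi / m -/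

lemma lo_ge (i : ℤ) : 1 ≤ D.lo i := by
  unfold CDatum.lo
  split
  · next h =>
    have := D.hX i (Finset.min'_mem _ h)
    simp only [Finset.mem_Icc] at this
    omega
  · have := S.hl; omega

lemma lo_le (i : ℤ) : D.lo i ≤ S.l := by
  unfold CDatum.lo
  split
  · next h =>
    have := D.hX i (Finset.min'_mem _ h)
    simp only [Finset.mem_Icc] at this
    omega
  · omega

lemma hi_nonneg (i : ℤ) : 0 ≤ D.hi i := by
  unfold CDatum.hi
  split
  · next h =>
    have := D.hX i (Finset.max'_mem _ h)
    simp only [Finset.mem_Icc] at this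
    omega
  · omega

lemma hi_le (i : ℤ) : D.hi i ≤ S.l - 1 := by
  unfold CDatum.hi
  split
  · next h =>
    have := D.hX i (Finset.max'_mem _ h)
    simp only [Finset.mem_Icc] at this
    omega
  · have := S.hl; omega

lemma lo_le_hi {i : ℤ} (h : (D.X i).Nonempty) : D.lo i ≤ D.hi i := by
  unfold CDatum.lo CDatum.hi
  rw [dif_pos h, dif_pos h]
  exact Finset.min'_le _ _ (Finset.max'_mem _ h)

lemma hi_pos {i : ℤ} (h : (D.X i).Nonempty) : 1 ≤ D.hi i := by
  have := lo_le_hi h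
  have := lo_ge (D := D) i
  omega

lemma lo_lt_l {i : ℤ} (h : (D.X i).Nonempty) : D.lo i ≤ S.l - 1 := by
  have := lo_le_hi h
  have := hi_le (D := D) i
  omega

lemma lo_empty {i : ℤ} (h : D.X i = ∅) : D.lo i = S.l := by
  unfold CDatum.lo
  rw [dif_neg (by simp [h])]

lemma hi_empty {i : ℤ} (h : D.X i = ∅) : D.hi i = 0 := by
  unfold CDatum.hi
  rw [dif_neg (by simp [h])]

lemma m_pos {i : ℤ} (h : (D.X i).Nonempty) : 1 ≤ D.m i := by
  unfold CDatum.m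
  exact_mod_cast Finset.card_pos.2 h

lemma X_in_range {i : ℤ} (h : (D.X i).Nonempty) : 2 ≤ i ∧ i ≤ S.p := by
  by_contra hc
  rw [D.hXout i hc] at h
  exact absurd h (by simp)

/-! ### membership unfolds -/

lemma mem_BI_odd {i w : ℤ} (ho : Odd i) :
    w ∈ D.BI i ↔ S.s i ≤ w ∧ w ≤ S.s i + D.hi i - 1 := by
  unfold CDatum.BI
  rw [if_pos ho, Finset.mem_Icc]

lemma mem_BI_even {i w : ℤ} (he : Even i) :
    w ∈ D.BI i ↔ S.s i - D.hi i + 1 ≤ w ∧ w ≤ S.s i := by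
  unfold CDatum.BI
  rw [if_neg (by rwa [Int.not_odd_iff_even]), Finset.mem_Icc]

lemma mem_RI_odd {i w : ℤ} (ho : Odd i) :
    w ∈ D.RI i ↔ S.s (i - 1) - (S.l - D.lo i) + 1 ≤ w ∧ w ≤ S.s (i - 1) := by
  unfold CDatum.RI
  rw [if_pos ho, Finset.mem_Icc]

lemma mem_RI_even {i w : ℤ} (he : Even i) :
    w ∈ D.RI i ↔ S.s (i - 1) ≤ w ∧ w ≤ S.s (i - 1) + (S.l - D.lo i) - 1 := by
  unfold CDatum.RI
  rw [if_neg (by rwa [Int.not_odd_iff_even]), Finset.mem_Icc]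

lemma xiLo_odd {i : ℤ} (ho : Odd i) :
    D.xiLo i = S.s (i - 1) - (S.l - D.lo i) + 1 := by
  unfold CDatum.xiLo; rw [if_pos ho]

lemma xiLo_even {i : ℤ} (he : Even i) : D.xiLo i = S.s (i - 1) := by
  unfold CDatum.xiLo; rw [if_neg (by rwa [Int.not_odd_iff_even])]

lemma xiHi_odd {j : ℤ} (ho : Odd j) : D.xiHi j = S.s j + D.hi j - 1 := by
  unfold CDatum.xiHi; rw [if_neg (by rwa [Int.not_even_iff_odd])]

lemma xiHi_even {j : ℤ} (he : Even j) : D.xiHi j = S.s j := by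
  unfold CDatum.xiHi; rw [if_pos he]

lemma mem_Xi {i k w : ℤ} : w ∈ D.Xi i k ↔ D.xiLo i ≤ w ∧ w ≤ D.xiHi (i + k) := by
  unfold CDatum.Xi; rw [Finset.mem_Icc]

lemma BI_empty {i : ℤ} (h : D.X i = ∅) : D.BI i = ∅ := by
  unfold CDatum.BI
  have := hi_empty (D := D) h
  split
  · exact Finset.Icc_eq_empty (by omega)
  · exact Finset.Icc_eq_empty (by omega)

lemma RI_empty {i : ℤ} (h : D.X i = ∅) : D.RI i = ∅ := by
  unfold CDatum.RI
  have := lo_empty (D := D) h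
  split
  · exact Finset.Icc_eq_empty (by omega)
  · exact Finset.Icc_eq_empty (by omega)

lemma mem_BigB {w : ℤ} : w ∈ D.BigB ↔ ∃ i, 2 ≤ i ∧ i ≤ S.p ∧ w ∈ D.BI i := by
  unfold CDatum.BigB
  simp only [Finset.mem_biUnion, Finset.mem_Icc]
  constructor
  · rintro ⟨i, ⟨h1, h2⟩, h3⟩; exact ⟨i, h1, h2, h3⟩
  · rintro ⟨i, h1, h2, h3⟩; exact ⟨i, ⟨h1, h2⟩, h3⟩

lemma mem_BigR {w : ℤ} : w ∈ D.BigR ↔ ∃ i, 2 ≤ i ∧ i ≤ S.p ∧ w ∈ D.RI i := by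
  unfold CDatum.BigR
  simp only [Finset.mem_biUnion, Finset.mem_Icc]
  constructor
  · rintro ⟨i, ⟨h1, h2⟩, h3⟩; exact ⟨i, h1, h2, h3⟩
  · rintro ⟨i, h1, h2, h3⟩; exact ⟨i, ⟨h1, h2⟩, h3⟩

lemma parity_cases (i : ℤ) : (Odd i ∧ ¬ Even i) ∨ (Even i ∧ ¬ Odd i) := by
  rcases Int.even_or_odd i with h | h
  · exact Or.inr ⟨h, by rwa [Int.not_odd_iff_even]⟩
  · exact Or.inl ⟨h, by rwa [Int.not_even_iff_odd]⟩

end Aux10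

namespace Aux10

open Finset

variable {S : NakSetup} {D : CDatum S}

/-- The bundled hypotheses of a well-configured datum with `T ≠ ∅`. -/
structure Ctx (S : NakSetup) (D : CDatum S) : Prop where
  hT : D.T.Nonempty
  hblk : ∀ a b, D.IsBlock a b → D.Admissible a (b - a) ∧ D.Full a (b - a)
  hdisj : ∀ a b a' b', D.ConsecBlocks a b a' b' →
    D.Xi a (b - a) ∩ D.Xi a' (b' - a') = ∅
  hth0 : ∀ a b, D.FirstBlock a b → D.GoodTheta (Finset.Icc 1 (D.xiLo a - 1))
  hthm : ∀ a b a' b', D.ConsecBlocks a b a' b' →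
    D.GoodTheta (Finset.Icc (D.xiHi b + 1) (D.xiLo a' - 1))
  hthl : ∀ a b, D.LastBlock a b → D.GoodTheta (Finset.Icc (D.xiHi b + 1) S.n)
  hr0 : ∀ a b, D.FirstBlock a b → D.IsRigidI (D.Xi a (b - a)) →
    D.IsRigidI (Finset.Icc 1 (D.xiLo a - 1)) ∨ D.FullType3 a b
  hrm : ∀ a b a' b', D.ConsecBlocks a b a' b' → D.IsRigidI (D.Xi a' (b' - a')) →
    D.IsRigidI (Finset.Icc (D.xiHi b + 1) (D.xiLo a' - 1)) ∨ D.FullType3 a' b'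
  hsm : ∀ a b a' b', D.ConsecBlocks a b a' b' → D.IsSupport (D.Xi a (b - a)) →
    D.IsSupport (Finset.Icc (D.xiHi b + 1) (D.xiLo a' - 1)) ∨ D.FullType3 a b
  hsl : ∀ a b, D.LastBlock a b → D.IsSupport (D.Xi a (b - a)) →
    D.IsSupport (Finset.Icc (D.xiHi b + 1) S.n) ∨ D.FullType3 a b

lemma X_ne_of_run {a b j : ℤ} (hb : D.IsBlock a b) (h1 : a ≤ j) (h2 : j ≤ b) :
    (D.X j).Nonempty := hb.2.2.2.1 j h1 h2

lemma exists_block {i : ℤ} (hne : (D.X i).Nonempty) :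
    ∃ a b, D.IsBlock a b ∧ a ≤ i ∧ i ≤ b := by
  obtain ⟨h2, hip⟩ := X_in_range hne
  classical
  set W : Finset ℤ := (Finset.Icc 2 i).filter
    (fun a => ∀ j ∈ Finset.Icc a i, (D.X j).Nonempty) with hW
  have hiW : i ∈ W := by
    simp only [hW, Finset.mem_filter, Finset.mem_Icc]
    refine ⟨⟨h2, le_rfl⟩, ?_⟩
    intro j hj
    have : j = i := by omega
    rwa [this]
  set a := W.min' ⟨i, hiW⟩ with ha
  have haW : a ∈ W := Finset.min'_mem _ _
  simp only [hW, Finset.mem_filter, Finset.mem_Icc] at haW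
  set V : Finset ℤ := (Finset.Icc i S.p).filter
    (fun b => ∀ j ∈ Finset.Icc i b, (D.X j).Nonempty) with hV
  have hiV : i ∈ V := by
    simp only [hV, Finset.mem_filter, Finset.mem_Icc]
    refine ⟨⟨le_rfl, hip⟩, ?_⟩
    intro j hj
    have : j = i := by omega
    rwa [this]
  set b := V.max' ⟨i, hiV⟩ with hbdef
  have hbV : b ∈ V := Finset.max'_mem _ _
  simp only [hV, Finset.mem_filter, Finset.mem_Icc] at hbV
  refine ⟨a, b, ⟨haW.1.1, hbV.1.2, by omega, ?_, ?_, ?_⟩, haW.1.2, hbV.1.1⟩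
  · intro j hj1 hj2
    rcases le_or_gt j i with h | h
    · exact haW.2 j (by omega)
    · exact hbV.2 j (by omega)
  · rcases eq_or_lt_of_le haW.1.1 with h | h
    · exact D.hXout (a - 1) (by omega)
    · by_contra hc
      replace hc := Finset.nonempty_iff_ne_empty.mpr hc
      have : a - 1 ∈ W := by
        simp only [hW, Finset.mem_filter, Finset.mem_Icc]
        refine ⟨⟨by omega, by omega⟩, ?_⟩
        intro j hj
        rcases eq_or_lt_of_le hj.1 with h' | h'
        · rwa [← h']
        · exact haW.2 j (by omega)
      have := Finset.min'_le W _ this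
      omega
  · rcases eq_or_lt_of_le hbV.1.2 with h | h
    · exact D.hXout (b + 1) (by omega)
    · by_contra hc
      replace hc := Finset.nonempty_iff_ne_empty.mpr hc
      have : b + 1 ∈ V := by
        simp only [hV, Finset.mem_filter, Finset.mem_Icc]
        refine ⟨⟨by omega, by omega⟩, ?_⟩
        intro j hj
        rcases eq_or_lt_of_le hj.2 with h' | h'
        · rw [h']; exact hc
        · exact hbV.2 j (by omega)
      have := Finset.le_max' V _ this
      omega

lemma block_trichotomy {a b a' b' : ℤ} (h1 : D.IsBlock a b) (h2 : D.IsBlock a' b') :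
    (a = a' ∧ b = b') ∨ b < a' ∨ b' < a := by
  by_cases hov : a' ≤ b ∧ a ≤ b'
  · left
    have ha : a = a' := by
      rcases lt_trichotomy a a' with h | h | h
      · exfalso
        have hne := X_ne_of_run h1 (j := a' - 1) (by omega) (by omega)
        rw [h2.2.2.2.2.1] at hne
        exact absurd hne (by simp)
      · exact h
      · exfalso
        have hne := X_ne_of_run h2 (j := a - 1) (by omega) (by omega)
        rw [h1.2.2.2.2.1] at hne
        exact absurd hne (by simp)
    have hbb : b = b' := by
      rcases lt_trichotomy b b' with h | h | h
      · exfalso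
        have hne := X_ne_of_run h2 (j := b + 1) (by omega) (by omega)
        rw [h1.2.2.2.2.2] at hne
        exact absurd hne (by simp)
      · exact h
      · exfalso
        have hne := X_ne_of_run h1 (j := b' + 1) (by omega) (by omega)
        rw [h2.2.2.2.2.2] at hne
        exact absurd hne (by simp)
    exact ⟨ha, hbb⟩
  · right
    have h1' := h1.2.2.1
    have h2' := h2.2.2.1
    omega

lemma xiLo_le_s {a : ℤ} (hXa : (D.X a).Nonempty) :
    D.xiLo a ≤ S.s (a - 1) ∧ S.s (a - 1) - S.l + 2 ≤ D.xiLo a := by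
  have h1 := lo_ge (D := D) a
  have h2 := lo_lt_l hXa
  rcases parity_cases a with ⟨ho, _⟩ | ⟨he, _⟩
  · rw [xiLo_odd ho]; omega
  · rw [xiLo_even he]; omega

lemma s_le_xiHi {b : ℤ} (hXb : (D.X b).Nonempty) :
    S.s b ≤ D.xiHi b ∧ D.xiHi b ≤ S.s b + S.l - 2 := by
  have h1 := hi_pos hXb
  have h2 := hi_le (D := D) b
  rcases parity_cases b with ⟨ho, _⟩ | ⟨he, _⟩
  · rw [xiHi_odd ho]; omega
  · rw [xiHi_even he]; omega

lemma xi_nonempty {a b : ℤ} (hb : D.IsBlock a b) : D.xiLo a ≤ D.xiHi b := by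
  have hXa := X_ne_of_run hb le_rfl hb.2.2.1
  have hXb := X_ne_of_run hb hb.2.2.1 le_rfl
  have h1 := (xiLo_le_s hXa).1
  have h2 := (s_le_xiHi hXb).1
  have h3 := s_le (S := S) (i := a - 1) (j := b) (by have := hb.1; omega)
    (by have := hb.2.2.1; omega) hb.2.1
  have := hb.2.2.1
  omega

lemma mem_Xi_blk {a b w : ℤ} : w ∈ D.Xi a (b - a) ↔ D.xiLo a ≤ w ∧ w ≤ D.xiHi b := by
  rw [mem_Xi]
  have : a + (b - a) = b := by ring
  rw [this]

lemma xi_ordered_aux (C : Ctx S D) : ∀ N : ℕ, ∀ a b a' b' : ℤ, D.IsBlock a b →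
    D.IsBlock a' b' → b < a' → (a' - b).toNat ≤ N → D.xiHi b < D.xiLo a' := by
  intro N
  induction N with
  | zero => intro a b a' b' _ _ hlt hN; omega
  | succ n ih =>
    intro a b a' b' hb hb' hlt hN
    by_cases hgap : ∀ j, b < j → j < a' → D.X j = ∅
    · -- consecutive blocks
      have hcb : D.ConsecBlocks a b a' b' := ⟨hb, hb', hlt, hgap⟩
      have hdisj := C.hdisj a b a' b' hcb
      -- first: xiLo a < xiLo a'
      have hXa := X_ne_of_run hb le_rfl hb.2.2.1
      have hXa' := X_ne_of_run hb' le_rfl hb'.2.2.1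
      have ha2 : a' ≠ b + 1 := by
        intro h
        have := hb.2.2.2.2.2
        rw [← h] at this
        rw [this] at hXa'
        exact absurd hXa' (by simp)
      have hs2 : S.s (a - 1) + S.l + 2 ≤ S.s (a' - 1) := by
        refine s_two_steps (by have := hb.1; omega) (by have := hb.2.2.1; omega)
          (by have := hb'.2.1; have := hb'.2.2.1; omega)
      have h1 := (xiLo_le_s hXa).1
      have h1' := (xiLo_le_s hXa').2
      have hlo : D.xiLo a < D.xiLo a' := by omega
      by_contra hc
      push_neg at hc
      have hw1 : D.xiLo a' ∈ D.Xi a (b - a) := by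
        rw [mem_Xi_blk]; exact ⟨by omega, hc⟩
      have hw2 : D.xiLo a' ∈ D.Xi a' (b' - a') := by
        rw [mem_Xi_blk]; exact ⟨le_rfl, xi_nonempty hb'⟩
      exact inter_empty hdisj hw1 hw2
    · push_neg at hgap
      obtain ⟨j, hj1, hj2, hj3⟩ := hgap
      replace hj3 : (D.X j).Nonempty := hj3
      obtain ⟨a2, b2, hb2, hp1, hp2⟩ := exists_block hj3
      have hab := hb.2.2.1
      have hab' := hb'.2.2.1
      have hab2 := hb2.2.2.1
      have hba2 : b < a2 := by
        rcases block_trichotomy hb hb2 with ⟨h1, h2⟩ | h | h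
        · omega
        · exact h
        · omega
      have hb2a' : b2 < a' := by
        rcases block_trichotomy hb2 hb' with ⟨h1, h2⟩ | h | h
        · omega
        · exact h
        · omega
      have e1 := ih a b a2 b2 hb hb2 hba2 (by omega)
      have e2 := xi_nonempty hb2
      have e3 := ih a2 b2 a' b' hb2 hb' hb2a' (by omega)
      omega

lemma xi_ordered (C : Ctx S D) {a b a' b' : ℤ} (hb : D.IsBlock a b)
    (hb' : D.IsBlock a' b') (hlt : b < a') : D.xiHi b < D.xiLo a' :=
  xi_ordered_aux C (a' - b).toNat a b a' b' hb hb' hlt le_rfl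

lemma BI_subset_Xi {a b i : ℤ} (hb : D.IsBlock a b) (hia : a ≤ i) (hib : i ≤ b) :
    ∀ w ∈ D.BI i, D.xiLo a ≤ w ∧ w ≤ D.xiHi b := by
  intro w hw
  have hXi := X_ne_of_run hb hia hib
  have hXa := X_ne_of_run hb le_rfl hb.2.2.1
  have hXb := X_ne_of_run hb hb.2.2.1 le_rfl
  have hb1 := hb.1
  have hb2 := hb.2.1
  have hb3 := hb.2.2.1
  have l2 := (xiLo_le_s hXa).1
  have l1 : S.s (a - 1) ≤ S.s (i - 1) :=
    (by have := s_le (S := S) (i := a - 1) (j := i - 1) (by omega) (by omega) (by omega); omega)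
  have hhi := hi_le (D := D) i
  have hhip := hi_pos hXi
  have hXiHi := (s_le_xiHi hXb).1
  rcases parity_cases i with ⟨ho, _⟩ | ⟨he, _⟩
  · rw [mem_BI_odd ho] at hw
    have l3 := s_step (S := S) (i := i) (by omega) (by omega)
    constructor
    · omega
    · rcases eq_or_lt_of_le hib with h | h
      · subst h
        rw [xiHi_odd ho]
        omega
      · have := s_jump_odd (S := S) (i := i) (j := b) (by omega) ho h (by omega)
        omega
  · rw [mem_BI_even he] at hw
    have l3 := s_step_even (S := S) (i := i) (by omega) (by omega) he
    have l4 := s_le (S := S) (i := i) (j := b) (by omega) hib (by omega)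
    omega

lemma RI_subset_Xi {a b i : ℤ} (hb : D.IsBlock a b) (hia : a ≤ i) (hib : i ≤ b) :
    ∀ w ∈ D.RI i, D.xiLo a ≤ w ∧ w ≤ D.xiHi b := by
  intro w hw
  have hXi := X_ne_of_run hb hia hib
  have hXa := X_ne_of_run hb le_rfl hb.2.2.1
  have hXb := X_ne_of_run hb hb.2.2.1 le_rfl
  have hb1 := hb.1
  have hb2 := hb.2.1
  have hb3 := hb.2.2.1
  have l2 := (xiLo_le_s hXa).1
  have hXiHi := (s_le_xiHi hXb).1
  have hloi := lo_ge (D := D) i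
  have hloi2 := lo_lt_l hXi
  have l1 : S.s (a - 1) ≤ S.s (i - 1) :=
    (by have := s_le (S := S) (i := a - 1) (j := i - 1) (by omega) (by omega) (by omega); omega)
  rcases parity_cases i with ⟨ho, _⟩ | ⟨he, _⟩
  · rw [mem_RI_odd ho] at hw
    constructor
    · rcases eq_or_lt_of_le hia with h | h
      · subst h
        rw [xiLo_odd ho]
        omega
      · rcases eq_or_lt_of_le (show a + 1 ≤ i by omega) with h' | h'
        · -- i = a + 1, so a is even
          have hea : Even a := by
            rcases ho with ⟨t, ht⟩
            exact ⟨t, by omega⟩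
          have hstep := s_step_even (S := S) (i := a) (by omega) (by omega) hea
          have e1 : i - 1 = a := by omega
          rw [e1] at hw
          omega
        · have := s_two_steps (S := S) (i := a - 1) (j := i - 1) (by omega) (by omega) (by omega)
          omega
    · have l4 : S.s (i - 1) ≤ S.s b :=
        (by have := s_le (S := S) (i := i - 1) (j := b) (by omega) (by omega) (by omega); omega)
      omega
  · rw [mem_RI_even he] at hw
    constructor
    · omega
    · rcases eq_or_lt_of_le hib with h | h
      · subst h
        rw [xiHi_even he]
        have := s_step_even (S := S) (i := i) (by omega) (by omega) he
        omega
      · have := s_two_steps (S := S) (i := i - 1) (j := b) (by omega) (by omega) (by omega)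
        omega

/-- any element of `BigB ∪ BigR` lies in the `Ξ` of some block -/
lemma mem_Big_elim {w : ℤ} (hw : w ∈ D.BigB ∨ w ∈ D.BigR) :
    ∃ a2 b2, D.IsBlock a2 b2 ∧ D.xiLo a2 ≤ w ∧ w ≤ D.xiHi b2 := by
  have : ∃ i, 2 ≤ i ∧ i ≤ S.p ∧ (w ∈ D.BI i ∨ w ∈ D.RI i) := by
    rcases hw with h | h
    · obtain ⟨i, h1, h2, h3⟩ := mem_BigB.1 h
      exact ⟨i, h1, h2, Or.inl h3⟩
    · obtain ⟨i, h1, h2, h3⟩ := mem_BigR.1 h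
      exact ⟨i, h1, h2, Or.inr h3⟩
  obtain ⟨i, h1, h2, h3⟩ := this
  have hXi : (D.X i).Nonempty := by
    by_contra hc
    replace hc := Finset.not_nonempty_iff_eq_empty.mp (by exact hc)
    rcases h3 with h | h
    · rw [BI_empty hc] at h; exact absurd h (by simp)
    · rw [RI_empty hc] at h; exact absurd h (by simp)
  obtain ⟨a2, b2, hb2, hp1, hp2⟩ := exists_block hXi
  rcases h3 with h | h
  · exact ⟨a2, b2, hb2, BI_subset_Xi hb2 hp1 hp2 w h⟩
  · exact ⟨a2, b2, hb2, RI_subset_Xi hb2 hp1 hp2 w h⟩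

/-- localization of `BigB` within the `Ξ` of a block -/
lemma BigB_local (C : Ctx S D) {a b w : ℤ} (hb : D.IsBlock a b) (hw : w ∈ D.BigB)
    (h1 : D.xiLo a ≤ w) (h2 : w ≤ D.xiHi b) : ∃ i, a ≤ i ∧ i ≤ b ∧ w ∈ D.BI i := by
  obtain ⟨i, hi1, hi2, hi3⟩ := mem_BigB.1 hw
  have hXi : (D.X i).Nonempty := by
    by_contra hc
    replace hc := Finset.not_nonempty_iff_eq_empty.mp (by exact hc)
    rw [BI_empty hc] at hi3; exact absurd hi3 (by simp)
  obtain ⟨a2, b2, hb2, hp1, hp2⟩ := exists_block hXi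
  have hsub := BI_subset_Xi hb2 hp1 hp2 w hi3
  rcases block_trichotomy hb hb2 with ⟨e1, e2⟩ | h | h
  · exact ⟨i, by omega, by omega, hi3⟩
  · have := xi_ordered C hb hb2 h
    omega
  · have := xi_ordered C hb2 hb h
    omega

lemma BigR_local (C : Ctx S D) {a b w : ℤ} (hb : D.IsBlock a b) (hw : w ∈ D.BigR)
    (h1 : D.xiLo a ≤ w) (h2 : w ≤ D.xiHi b) : ∃ i, a ≤ i ∧ i ≤ b ∧ w ∈ D.RI i := by
  obtain ⟨i, hi1, hi2, hi3⟩ := mem_BigR.1 hw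
  have hXi : (D.X i).Nonempty := by
    by_contra hc
    replace hc := Finset.not_nonempty_iff_eq_empty.mp (by exact hc)
    rw [RI_empty hc] at hi3; exact absurd hi3 (by simp)
  obtain ⟨a2, b2, hb2, hp1, hp2⟩ := exists_block hXi
  have hsub := RI_subset_Xi hb2 hp1 hp2 w hi3
  rcases block_trichotomy hb hb2 with ⟨e1, e2⟩ | h | h
  · exact ⟨i, by omega, by omega, hi3⟩
  · have := xi_ordered C hb hb2 h
    omega
  · have := xi_ordered C hb2 hb h
    omega

lemma no_Big_theta0 (C : Ctx S D) {a b w : ℤ} (hfb : D.FirstBlock a b)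
    (hw : w ≤ D.xiLo a - 1) : w ∉ D.BigB ∧ w ∉ D.BigR := by
  constructor <;>
  · intro hc
    obtain ⟨a2, b2, hb2, h1, h2⟩ := mem_Big_elim (D := D) (by first | exact Or.inl hc | exact Or.inr hc)
    have hXa2 := X_ne_of_run hb2 le_rfl hb2.2.2.1
    have hab2 := hb2.2.2.1
    rcases block_trichotomy hfb.1 hb2 with ⟨e1, e2⟩ | h | h
    · subst e1
      omega
    · have := xi_ordered C hfb.1 hb2 h
      have := xi_nonempty hfb.1
      omega
    · have := hfb.2 a2 (by omega)
      rw [this] at hXa2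
      exact absurd hXa2 (by simp)

lemma no_Big_thetam (C : Ctx S D) {a b a' b' w : ℤ} (hcb : D.ConsecBlocks a b a' b')
    (h1 : D.xiHi b < w) (h2 : w < D.xiLo a') : w ∉ D.BigB ∧ w ∉ D.BigR := by
  constructor <;>
  · intro hc
    obtain ⟨a2, b2, hb2, e1, e2⟩ := mem_Big_elim (D := D) (by first | exact Or.inl hc | exact Or.inr hc)
    have hXa2 := X_ne_of_run hb2 le_rfl hb2.2.2.1
    have hab2 := hb2.2.2.1
    rcases block_trichotomy hcb.1 hb2 with ⟨f1, f2⟩ | h | h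
    · subst f2
      omega
    · -- b < a2 : compare with second block
      rcases block_trichotomy hb2 hcb.2.1 with ⟨f1, f2⟩ | h' | h'
      · subst f1
        omega
      · -- b2 < a' : block strictly inside the gap
        have := hcb.2.2.2 a2 h (by have := hb2.2.2.1; omega)
        rw [this] at hXa2
        exact absurd hXa2 (by simp)
      · have := xi_ordered C hcb.2.1 hb2 h'
        have := xi_nonempty hcb.2.1
        omega
    · have := xi_ordered C hb2 hcb.1 h
      have := xi_nonempty hcb.1
      omega

lemma no_Big_thetal (C : Ctx S D) {a b w : ℤ} (hlb : D.LastBlock a b)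
    (h1 : D.xiHi b < w) : w ∉ D.BigB ∧ w ∉ D.BigR := by
  constructor <;>
  · intro hc
    obtain ⟨a2, b2, hb2, e1, e2⟩ := mem_Big_elim (D := D) (by first | exact Or.inl hc | exact Or.inr hc)
    have hXa2 := X_ne_of_run hb2 le_rfl hb2.2.2.1
    have hab2 := hb2.2.2.1
    rcases block_trichotomy hlb.1 hb2 with ⟨f1, f2⟩ | h | h
    · subst f2
      omega
    · have := hlb.2 a2 (by omega)
      rw [this] at hXa2
      exact absurd hXa2 (by simp)
    · have := xi_ordered C hb2 hlb.1 h
      have := xi_nonempty hlb.1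
      omega

lemma next_block {a b : ℤ} (hb : D.IsBlock a b) :
    D.LastBlock a b ∨ ∃ a' b', D.ConsecBlocks a b a' b' := by
  classical
  set W : Finset ℤ := (Finset.Icc (b + 1) S.p).filter (fun j => (D.X j).Nonempty) with hW
  by_cases hWne : W.Nonempty
  · right
    set j0 := W.min' hWne with hj0
    have hj0W : j0 ∈ W := Finset.min'_mem _ _
    simp only [hW, Finset.mem_filter, Finset.mem_Icc] at hj0W
    have hj0min : ∀ j ∈ W, j0 ≤ j := fun j hj => Finset.min'_le _ _ hj
    have hj0b : b + 2 ≤ j0 := by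
      rcases eq_or_lt_of_le hj0W.1.1 with h | h
      · exfalso
        have := hb.2.2.2.2.2
        rw [h] at this
        rw [this] at hj0W
        exact absurd hj0W.2 (by simp)
      · omega
    obtain ⟨a2, b2, hb2, hp1, hp2⟩ := exists_block hj0W.2
    have hab := hb.2.2.1
    have hab2 := hb2.2.2.1
    have hba2 : b < a2 := by
      rcases block_trichotomy hb hb2 with ⟨f1, f2⟩ | h | h
      · omega
      · exact h
      · omega
    refine ⟨a2, b2, hb, hb2, hba2, ?_⟩
    intro j hj1 hj2
    by_contra hc
    replace hc := Finset.nonempty_iff_ne_empty.mpr hc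
    have hjW : j ∈ W := by
      simp only [hW, Finset.mem_filter, Finset.mem_Icc]
      exact ⟨⟨by omega, by have := hb2.2.1; have := hb2.2.2.1; omega⟩, hc⟩
    have := hj0min j hjW
    omega
  · left
    refine ⟨hb, ?_⟩
    intro j hj
    by_cases hjp : j ≤ S.p
    · by_contra hc
      replace hc := Finset.nonempty_iff_ne_empty.mpr hc
      exact hWne ⟨j, by simp only [hW, Finset.mem_filter, Finset.mem_Icc]; exact ⟨⟨by omega, hjp⟩, hc⟩⟩
    · exact D.hXout j (by omega)

lemma exists_first_block (C : Ctx S D) : ∃ a b, D.FirstBlock a b := by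
  obtain ⟨i0, hi0⟩ := C.hT
  unfold CDatum.T at hi0
  simp only [Finset.mem_filter, Finset.mem_Icc] at hi0
  classical
  set W : Finset ℤ := (Finset.Icc 2 S.p).filter (fun j => (D.X j).Nonempty) with hW
  have hWne : W.Nonempty := ⟨i0, by simp only [hW, Finset.mem_filter, Finset.mem_Icc]; exact hi0⟩
  set j0 := W.min' hWne with hj0
  have hj0W : j0 ∈ W := Finset.min'_mem _ _
  simp only [hW, Finset.mem_filter, Finset.mem_Icc] at hj0W
  obtain ⟨a2, b2, hb2, hp1, hp2⟩ := exists_block hj0W.2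
  refine ⟨a2, b2, hb2, ?_⟩
  intro j hj
  by_cases hjr : 2 ≤ j ∧ j ≤ S.p
  · by_contra hc
    replace hc := Finset.nonempty_iff_ne_empty.mpr hc
    have : j ∈ W := by simp only [hW, Finset.mem_filter, Finset.mem_Icc]; exact ⟨hjr, hc⟩
    have h1 := Finset.min'_le _ _ this
    have h2 : 2 ≤ a2 := hb2.1
    omega
  · exact D.hXout j hjr

/-- locating an arbitrary point of `[1, n]` relative to the Ξ/Θ decomposition -/
lemma locate (C : Ctx S D) {u : ℤ} (h1 : 1 ≤ u) (h2 : u ≤ S.n) :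
    (∃ a b, D.IsBlock a b ∧ D.xiLo a ≤ u ∧ u ≤ D.xiHi b) ∨
    (∃ a b, D.FirstBlock a b ∧ u ≤ D.xiLo a - 1) ∨
    (∃ a b a' b', D.ConsecBlocks a b a' b' ∧ D.xiHi b + 1 ≤ u ∧ u ≤ D.xiLo a' - 1) ∨
    (∃ a b, D.LastBlock a b ∧ D.xiHi b + 1 ≤ u) := by
  classical
  obtain ⟨a1, b1, hfb⟩ := exists_first_block C
  rcases le_or_gt u (D.xiLo a1 - 1) with hu | hu
  · exact Or.inr (Or.inl ⟨a1, b1, hfb, hu⟩)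
  -- u ≥ xiLo a1 : consider all block starts with xiLo ≤ u
  set A : Finset ℤ := (Finset.Icc 2 S.p).filter
    (fun a => (∃ b, D.IsBlock a b) ∧ D.xiLo a ≤ u) with hA
  have ha1A : a1 ∈ A := by
    simp only [hA, Finset.mem_filter, Finset.mem_Icc]
    exact ⟨⟨hfb.1.1, by have := hfb.1.2.1; have := hfb.1.2.2.1; omega⟩, ⟨b1, hfb.1⟩, by omega⟩
  set a2 := A.max' ⟨a1, ha1A⟩ with ha2
  have ha2A : a2 ∈ A := Finset.max'_mem _ _
  simp only [hA, Finset.mem_filter, Finset.mem_Icc] at ha2A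
  obtain ⟨⟨hr1, hr2⟩, ⟨b2, hb2⟩, hxl⟩ := ha2A
  rcases le_or_gt u (D.xiHi b2) with hu2 | hu2
  · exact Or.inl ⟨a2, b2, hb2, hxl, hu2⟩
  rcases next_block hb2 with hlast | ⟨a3, b3, hcb⟩
  · exact Or.inr (Or.inr (Or.inr ⟨a2, b2, hlast, by omega⟩))
  · refine Or.inr (Or.inr (Or.inl ⟨a2, b2, a3, b3, hcb, by omega, ?_⟩))
    by_contra hc
    push_neg at hc
    have hb3 := hcb.2.1
    have : a3 ∈ A := by
      simp only [hA, Finset.mem_filter, Finset.mem_Icc]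
      exact ⟨⟨hb3.1, by have := hb3.2.1; have := hb3.2.2.1; omega⟩, ⟨b3, hb3⟩, by omega⟩
    have h3 := Finset.le_max' A _ this
    have h4 := hcb.2.2.1
    have := hb2.2.2.1
    omega

end Aux10

namespace Aux10

open Finset

variable {S : NakSetup} {D : CDatum S}

lemma odd_add_two {x : ℤ} (h : Odd x) : Odd (x + 2) := by
  rcases h with ⟨t, ht⟩; exact ⟨t + 1, by omega⟩

lemma even_add_two {x : ℤ} (h : Even x) : Even (x + 2) := by
  rcases h with ⟨t, ht⟩; exact ⟨t + 1, by omega⟩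

lemma full_at (C : Ctx S D) {a b i : ℤ} (hb : D.IsBlock a b) (h1 : a ≤ i) (h2 : i ≤ b) :
    D.m i = D.hi i - D.lo i + 1 := by
  have hf := (C.hblk a b hb).2 (i - a) (by omega) (by omega)
  rw [show a + (i - a) = i by ring] at hf
  exact hf

lemma block_k (C : Ctx S D) {a b : ℤ} (hb : D.IsBlock a b) :
    b - a = 0 ∨ b - a = 1 ∨ b - a = 2 := by
  obtain ⟨_, _, _, _, hty⟩ := (C.hblk a b hb).1
  rcases hty with h|h|h|h|h|h|h|h <;> [skip; skip; skip; skip; skip; skip; skip; skip] <;>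
    first
    | exact Or.inl h.1
    | exact Or.inr (Or.inl h.1)
    | exact Or.inr (Or.inr h.1)

lemma b3_support {a b i : ℤ} (hsup : D.IsSupport (D.Xi a (b - a)))
    (hRIsub : ∀ w ∈ D.RI i, D.xiLo a ≤ w ∧ w ≤ D.xiHi b)
    (hBIsub : ∀ w ∈ D.BI i, D.xiLo a ≤ w ∧ w ≤ D.xiHi b)
    (h2 : 2 ≤ i) (hip : i ≤ S.p) :
    D.R ∩ D.RI i = ∅ ∧ D.B ∩ D.BI i = ∅ := by
  constructor
  · rw [Finset.eq_empty_iff_forall_notMem]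
    intro w hw
    rw [Finset.mem_inter] at hw
    exact inter_empty hsup.1 hw.1 (mem_Xi_blk.2 (hRIsub w hw.2))
  · rw [Finset.eq_empty_iff_forall_notMem]
    intro w hw
    rw [Finset.mem_inter] at hw
    have hmem : w ∈ D.B ∩ D.Xi a (b - a) :=
      Finset.mem_inter.2 ⟨hw.1, mem_Xi_blk.2 (hBIsub w hw.2)⟩
    rw [hsup.2, Finset.mem_sdiff] at hmem
    exact hmem.2 (mem_BigB.2 ⟨i, h2, hip, hw.2⟩)

lemma b3_rigid {a b i : ℤ} (hrig : D.IsRigidI (D.Xi a (b - a)))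
    (hRIsub : ∀ w ∈ D.RI i, D.xiLo a ≤ w ∧ w ≤ D.xiHi b)
    (hBIsub : ∀ w ∈ D.BI i, D.xiLo a ≤ w ∧ w ≤ D.xiHi b)
    (h2 : 2 ≤ i) (hip : i ≤ S.p) :
    D.R ∩ D.RI i = ∅ ∧ D.B ∩ D.BI i = ∅ := by
  constructor
  · rw [Finset.eq_empty_iff_forall_notMem]
    intro w hw
    rw [Finset.mem_inter] at hw
    have hmem : w ∈ D.R ∩ D.Xi a (b - a) :=
      Finset.mem_inter.2 ⟨hw.1, mem_Xi_blk.2 (hRIsub w hw.2)⟩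
    rw [hrig.2, Finset.mem_sdiff] at hmem
    exact hmem.2 (mem_BigR.2 ⟨i, h2, hip, hw.2⟩)
  · rw [Finset.eq_empty_iff_forall_notMem]
    intro w hw
    rw [Finset.mem_inter] at hw
    exact inter_empty hrig.1 hw.1 (mem_Xi_blk.2 (hBIsub w hw.2))

lemma b3_s2r {a b i x : ℤ} (hs : D.IsSuppToRigid (D.Xi a (b - a)) x)
    (hRIsub : ∀ w ∈ D.RI i, D.xiLo a ≤ w ∧ w ≤ D.xiHi b)
    (hBIsub : ∀ w ∈ D.BI i, D.xiLo a ≤ w ∧ w ≤ D.xiHi b)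
    (hRb : ∀ w ∈ D.RI i, w < x + S.l) (hBb : ∀ w ∈ D.BI i, x < w) :
    D.R ∩ D.RI i = ∅ ∧ D.B ∩ D.BI i = ∅ := by
  constructor
  · rw [Finset.eq_empty_iff_forall_notMem]
    intro w hw
    rw [Finset.mem_inter] at hw
    have hmem : w ∈ D.R ∩ D.Xi a (b - a) :=
      Finset.mem_inter.2 ⟨hw.1, mem_Xi_blk.2 (hRIsub w hw.2)⟩
    rw [hs.2.2.2.1, Finset.mem_filter] at hmem
    have := hRb w hw.2
    omega
  · rw [Finset.eq_empty_iff_forall_notMem]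
    intro w hw
    rw [Finset.mem_inter] at hw
    have hmem : w ∈ D.B ∩ D.Xi a (b - a) :=
      Finset.mem_inter.2 ⟨hw.1, mem_Xi_blk.2 (hBIsub w hw.2)⟩
    rw [hs.2.1, Finset.mem_filter] at hmem
    have := hBb w hw.2
    omega

lemma part_b3 (C : Ctx S D) (i : ℤ) (h2 : 2 ≤ i) (hip : i ≤ S.p) :
    D.R ∩ D.RI i = ∅ ∧ D.B ∩ D.BI i = ∅ := by
  by_cases hXi : (D.X i).Nonempty
  swap
  · replace hXi := Finset.not_nonempty_iff_eq_empty.mp hXi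
    rw [RI_empty hXi, BI_empty hXi, Finset.inter_empty, Finset.inter_empty]
    exact ⟨rfl, rfl⟩
  obtain ⟨a, b, hb, hia, hib⟩ := exists_block hXi
  have h2a := hb.1
  have hbp := hb.2.1
  have hab := hb.2.2.1
  have hRIsub := RI_subset_Xi hb hia hib
  have hBIsub := BI_subset_Xi hb hia hib
  have hXa := X_ne_of_run hb le_rfl hab
  have hXb := X_ne_of_run hb hab le_rfl
  obtain ⟨_, _, _, _, hty⟩ := (C.hblk a b hb).1
  have hloi := lo_ge (D := D) i
  have hloil := lo_lt_l hXi
  have hhii := hi_pos hXi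
  have hhiil := hi_le (D := D) i
  rcases hty with ⟨hk,hlo,hhic,hsup⟩|⟨hk,hlo,hhi,hrig⟩|⟨hk,hlo,hhi,hst⟩|
    ⟨hk,hodd,hg1,hg2,hm,hrig⟩|⟨hk,heven,hg1,hg2,hm,hsup⟩|⟨hk,hodd,hg1,hg2,hm,hst⟩|
    ⟨hk,heven,hg1,hg2,hm,hst⟩|⟨hk,hd2,heven,hg1,hg2,hg3,hg4,hex⟩
  · exact b3_support hsup hRIsub hBIsub h2 hip
  · exact b3_rigid hrig hRIsub hBIsub h2 hip
  · -- type III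
    have ha : a = i := by omega
    have hbi : b = i := by omega
    rw [ha, hbi] at hst
    rw [ha] at hlo hhi
    rw [ha, hbi] at hRIsub hBIsub
    rcases hst with hsup | hrig | ⟨x, hx, hs⟩
    · exact b3_support hsup hRIsub hBIsub h2 hip
    · exact b3_rigid hrig hRIsub hBIsub h2 hip
    · rw [Finset.mem_sdiff, mem_Xi_blk] at hx
      have hstep := s_step (S := S) (i := i) (by omega) (by omega)
      refine b3_s2r hs hRIsub hBIsub ?_ ?_
      · intro w hw
        rcases parity_cases i with ⟨ho, he⟩ | ⟨he, ho⟩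
        · rw [mem_RI_odd ho] at hw
          rw [xiLo_odd ho] at hx
          omega
        · rw [mem_RI_even he] at hw
          rw [xiLo_even he] at hx
          omega
      · intro w hw
        rcases parity_cases i with ⟨ho, he⟩ | ⟨he, ho⟩
        · rw [mem_BI_odd ho] at hw
          have hBx : ¬ (S.s i ≤ x ∧ x ≤ S.s i + D.hi i - 1) := by
            intro hcc
            exact hx.2 ((mem_BI_odd (D := D) ho).2 hcc)
          rw [xiHi_odd ho] at hx
          omega
        · rw [mem_BI_even he] at hw
          have hBx : ¬ (S.s i - D.hi i + 1 ≤ x ∧ x ≤ S.s i) := by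
            intro hcc
            exact hx.2 ((mem_BI_even (D := D) he).2 hcc)
          rw [xiHi_even he] at hx
          omega
  · exact b3_rigid hrig hRIsub hBIsub h2 hip
  · exact b3_support hsup hRIsub hBIsub h2 hip
  · -- type VI : a odd, b = a + 1
    rcases hst with hrig | ⟨x, hx, hs⟩
    · exact b3_rigid hrig hRIsub hBIsub h2 hip
    · rw [Finset.mem_Icc] at hx
      have hoa := hodd
      have hea1 : Even (a + 1) := Odd.add_one hoa
      have hXa1 := X_ne_of_run hb (j := a + 1) (by omega) (by omega)
      have hm1 := full_at C hb (i := a + 1) (by omega) (by omega)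
      have hlo1 := lo_ge (D := D) (a + 1)
      have hlo1l := lo_lt_l hXa1
      have hloa := lo_ge (D := D) a
      have hstep := s_step (S := S) (i := a) (by omega) (by omega)
      have hstep2 := s_step_even (S := S) (i := a + 1) (by omega) (by omega) hea1
      rw [show a + 1 - 1 = a by ring] at hstep2
      have hieq : i = a ∨ i = a + 1 := by omega
      rcases hieq with hieq | hieq <;> subst hieq
      · refine b3_s2r hs hRIsub hBIsub ?_ ?_
        · intro w hw
          rw [mem_RI_odd hoa] at hw
          omega
        · intro w hw
          rw [mem_BI_odd hoa] at hw
          omega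
      · refine b3_s2r hs hRIsub hBIsub ?_ ?_
        · intro w hw
          rw [mem_RI_even hea1, show a + 1 - 1 = a by ring] at hw
          omega
        · intro w hw
          rw [mem_BI_even hea1] at hw
          omega
  · -- type VII : a even, b = a + 1
    rcases hst with hsup | ⟨x, hx, hs⟩
    · exact b3_support hsup hRIsub hBIsub h2 hip
    · rw [Finset.mem_Icc] at hx
      have hoa1 : Odd (a + 1) := Even.add_one heven
      have hXa1 := X_ne_of_run hb (j := a + 1) (by omega) (by omega)
      have hma := full_at C hb (i := a) (by omega) (by omega)
      have hm1 := full_at C hb (i := a + 1) (by omega) (by omega)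
      have hhia := hi_pos hXa
      have hhial := hi_le (D := D) a
      have hhi1 := hi_pos hXa1
      have hstep := s_step (S := S) (i := a + 1) (by omega) (by omega)
      rw [show a + 1 - 1 = a by ring] at hstep
      have hstepa := s_step_even (S := S) (i := a) (by omega) (by omega) heven
      have hieq : i = a ∨ i = a + 1 := by omega
      rcases hieq with hieq | hieq <;> subst hieq
      · refine b3_s2r hs hRIsub hBIsub ?_ ?_
        · intro w hw
          rw [mem_RI_even heven] at hw
          omega
        · intro w hw
          rw [mem_BI_even heven] at hw
          omega
      · refine b3_s2r hs hRIsub hBIsub ?_ ?_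
        · intro w hw
          rw [mem_RI_odd hoa1, show a + 1 - 1 = a by ring] at hw
          omega
        · intro w hw
          rw [mem_BI_odd hoa1] at hw
          omega
  · -- type VIII : a even, b = a + 2, d = 2
    obtain ⟨x, hx, hs⟩ := hex
    rw [Finset.mem_Icc] at hx
    have hoa1 : Odd (a + 1) := Even.add_one heven
    have hea2 : Even (a + 2) := even_add_two heven
    have hXa1 := X_ne_of_run hb (j := a + 1) (by omega) (by omega)
    have hXa2 := X_ne_of_run hb (j := a + 2) (by omega) (by omega)
    have hhia := hi_pos hXa
    have hhial := hi_le (D := D) a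
    have hlo2 := lo_ge (D := D) (a + 2)
    have hlo2l := lo_lt_l hXa2
    have hstepa := s_step_even (S := S) (i := a) (by omega) (by omega) heven
    have hstep1 : S.s (a + 1) = S.s a + 2 := by
      have := sdiff_odd (S := S) (i := a + 1) (by omega) (by omega) hoa1
      rw [show a + 1 - 1 = a by ring, hd2] at this
      omega
    have hstep2 : S.s (a + 2) = S.s (a + 1) + S.l := by
      have := s_step_even_d2 (S := S) hd2 (i := a + 2) (by omega) (by omega) hea2
      rw [show a + 2 - 1 = a + 1 by ring] at this
      exact this
    have hieq : i = a ∨ i = a + 1 ∨ i = a + 2 := by omega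
    rcases hieq with hieq | hieq | hieq <;> subst hieq
    · refine b3_s2r hs hRIsub hBIsub ?_ ?_
      · intro w hw
        rw [mem_RI_even heven] at hw
        omega
      · intro w hw
        rw [mem_BI_even heven] at hw
        omega
    · refine b3_s2r hs hRIsub hBIsub ?_ ?_
      · intro w hw
        rw [mem_RI_odd hoa1, show a + 1 - 1 = a by ring] at hw
        omega
      · intro w hw
        rw [mem_BI_odd hoa1] at hw
        omega
    · refine b3_s2r hs hRIsub hBIsub ?_ ?_
      · intro w hw
        rw [mem_RI_even hea2, show a + 2 - 1 = a + 1 by ring] at hw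
        omega
      · intro w hw
        rw [mem_BI_even hea2] at hw
        omega

lemma B_not_BigB (C : Ctx S D) {w : ℤ} (hw : w ∈ D.B) : w ∉ D.BigB := by
  intro hc
  obtain ⟨i, h1, h2, h3⟩ := mem_BigB.1 hc
  exact inter_empty (part_b3 C i h1 h2).2 hw h3

lemma R_not_BigR (C : Ctx S D) {w : ℤ} (hw : w ∈ D.R) : w ∉ D.BigR := by
  intro hc
  obtain ⟨i, h1, h2, h3⟩ := mem_BigR.1 hc
  exact inter_empty (part_b3 C i h1 h2).1 hw h3

lemma adj_block (C : Ctx S D) {j : ℤ} (hXj : (D.X j).Nonempty)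
    (hXj1 : (D.X (j + 1)).Nonempty) :
    ∃ a b, D.IsBlock a b ∧ a ≤ j ∧ j + 1 ≤ b := by
  obtain ⟨a, b, hb, h1, h2⟩ := exists_block hXj
  refine ⟨a, b, hb, h1, ?_⟩
  by_contra hc
  have hbj : b = j := by omega
  have hXe := hb.2.2.2.2.2
  rw [hbj] at hXe
  rw [hXe] at hXj1
  exact absurd hXj1 (by simp)

lemma adj_even (C : Ctx S D) {j : ℤ} (hXj : (D.X j).Nonempty)
    (hXj1 : (D.X (j + 1)).Nonempty) (hej : Even j) :
    D.hi j + D.hi (j + 1) ≤ S.l - 1 := by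
  obtain ⟨a, b, hb, h1, h2⟩ := adj_block C hXj hXj1
  have hmj := full_at C hb (i := j) (by omega) (by omega)
  have hmj1 := full_at C hb (i := j + 1) (by omega) (by omega)
  have hjm := Int.even_iff.mp hej
  have hloj := lo_ge (D := D) j
  have hloj1 := lo_ge (D := D) (j + 1)
  have hhij := hi_pos hXj
  have hhij1 := hi_pos hXj1
  have hhijl := hi_le (D := D) j
  have hhij1l := hi_le (D := D) (j + 1)
  obtain ⟨_, _, _, _, hty⟩ := (C.hblk a b hb).1
  rcases hty with ⟨hk,_,_,_⟩|⟨hk,_,_,_⟩|⟨hk,_,_,_⟩|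
    ⟨hk,hodd,hg1,hg2,hm,_⟩|⟨hk,heven,hg1,hg2,hm,_⟩|⟨hk,hodd,hg1,hg2,hm,_⟩|
    ⟨hk,heven,hg1,hg2,hm,_⟩|⟨hk,hd2,heven,hg1,hg2,hg3,hg4,_⟩
  · omega
  · omega
  · omega
  · have ham := Int.odd_iff.mp hodd
    omega
  · have ham := Int.even_iff.mp heven
    have hjeq : j = a := by omega
    subst hjeq
    omega
  · have ham := Int.odd_iff.mp hodd
    omega
  · have ham := Int.even_iff.mp heven
    have hjeq : j = a := by omega
    subst hjeq
    omega
  · have ham := Int.even_iff.mp heven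
    have hjeq : j = a := by omega
    subst hjeq
    omega

lemma adj_odd (C : Ctx S D) {j : ℤ} (hXj : (D.X j).Nonempty)
    (hXj1 : (D.X (j + 1)).Nonempty) (hoj : Odd j) :
    S.l + 1 ≤ D.lo j + D.lo (j + 1) := by
  obtain ⟨a, b, hb, h1, h2⟩ := adj_block C hXj hXj1
  have hmj := full_at C hb (i := j) (by omega) (by omega)
  have hmj1 := full_at C hb (i := j + 1) (by omega) (by omega)
  have hjm := Int.odd_iff.mp hoj
  have hloj := lo_ge (D := D) j
  have hloj1 := lo_ge (D := D) (j + 1)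
  have hlojl := lo_lt_l hXj
  have hloj1l := lo_lt_l hXj1
  have hhij := hi_pos hXj
  have hhij1 := hi_pos hXj1
  obtain ⟨_, _, _, _, hty⟩ := (C.hblk a b hb).1
  rcases hty with ⟨hk,_,_,_⟩|⟨hk,_,_,_⟩|⟨hk,_,_,_⟩|
    ⟨hk,hodd,hg1,hg2,hm,_⟩|⟨hk,heven,hg1,hg2,hm,_⟩|⟨hk,hodd,hg1,hg2,hm,_⟩|
    ⟨hk,heven,hg1,hg2,hm,_⟩|⟨hk,hd2,heven,hg1,hg2,hg3,hg4,_⟩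
  · omega
  · omega
  · omega
  · have ham := Int.odd_iff.mp hodd
    have hjeq : j = a := by omega
    subst hjeq
    omega
  · have ham := Int.even_iff.mp heven
    omega
  · have ham := Int.odd_iff.mp hodd
    have hjeq : j = a := by omega
    subst hjeq
    omega
  · have ham := Int.even_iff.mp heven
    omega
  · have ham := Int.even_iff.mp heven
    have hjeq : j = a + 1 := by omega
    subst hjeq
    have := lo_ge (D := D) (a + 2)
    have hr : a + 1 + 1 = a + 2 := by ring
    rw [hr]
    omega

lemma d2_cross (C : Ctx S D) (hd2 : S.d = 2) {i : ℤ} (hoi : Odd i) :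
    D.hi i ≤ D.lo (i + 2) + 1 := by
  by_cases hXi : (D.X i).Nonempty
  swap
  · replace hXi := Finset.not_nonempty_iff_eq_empty.mp hXi
    rw [hi_empty hXi]
    have := lo_ge (D := D) (i + 2)
    omega
  by_cases hXi2 : (D.X (i + 2)).Nonempty
  swap
  · replace hXi2 := Finset.not_nonempty_iff_eq_empty.mp hXi2
    rw [lo_empty hXi2]
    have := hi_le (D := D) i
    omega
  have h2i := X_in_range hXi
  have h2i2 := X_in_range hXi2
  have hX1 : ¬ (D.X (i + 1)).Nonempty := by
    intro hX1
    obtain ⟨a, b, hb, h1, h2⟩ := adj_block C hXi hX1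
    have hb2 : i + 2 ≤ b := by
      by_contra hc
      have hbj : b = i + 1 := by omega
      have hXe := hb.2.2.2.2.2
      rw [hbj, show i + 1 + 1 = i + 2 by ring] at hXe
      rw [hXe] at hXi2
      exact absurd hXi2 (by simp)
    have hkk := block_k C hb
    have hae : a = i := by omega
    obtain ⟨_, _, _, _, hty⟩ := (C.hblk a b hb).1
    have him := Int.odd_iff.mp hoi
    rcases hty with ⟨hk,_,_,_⟩|⟨hk,_,_,_⟩|⟨hk,_,_,_⟩|
      ⟨hk,hodd,_,_,_,_⟩|⟨hk,heven,_,_,_,_⟩|⟨hk,hodd,_,_,_,_⟩|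
      ⟨hk,heven,_,_,_,_⟩|⟨hk,hd2',heven,_,_,_,_,_⟩
    · omega
    · omega
    · omega
    · omega
    · omega
    · omega
    · omega
    · have ham := Int.even_iff.mp heven
      omega
  replace hX1 := Finset.not_nonempty_iff_eq_empty.mp hX1
  obtain ⟨a1, b1, hb1, hp1, hp2⟩ := exists_block hXi
  have hb1i : b1 = i := by
    by_contra hc
    have := X_ne_of_run hb1 (j := i + 1) (by omega) (by omega)
    rw [hX1] at this
    exact absurd this (by simp)
  obtain ⟨a2, b2, hb2, hq1, hq2⟩ := exists_block hXi2
  have ha2i : a2 = i + 2 := by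
    by_contra hc
    have : a2 ≤ i + 1 := by omega
    have := X_ne_of_run hb2 (j := i + 1) (by omega) (by omega)
    rw [hX1] at this
    exact absurd this (by simp)
  have hord := xi_ordered C hb1 hb2 (by omega)
  have hoi2 : Odd (i + 2) := odd_add_two hoi
  rw [hb1i, ha2i, xiHi_odd hoi, xiLo_odd hoi2, show i + 2 - 1 = i + 1 by ring] at hord
  have hstep : S.s (i + 1) = S.s i + S.l := by
    have := s_step_even_d2 (S := S) hd2 (i := i + 1) (by omega)
      (by have := hb2.2.1; have := hb2.2.2.1; omega) (Odd.add_one hoi)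
    rw [show i + 1 - 1 = i by ring] at this
    omega
  omega

end Aux10

namespace Aux10

open Finset

variable {S : NakSetup} {D : CDatum S}

lemma not_R_of_BigR (C : Ctx S D) {w : ℤ} (h : w ∈ D.BigR) : w ∉ D.R :=
  fun hR => R_not_BigR C hR h

lemma not_B_of_BigB (C : Ctx S D) {w : ℤ} (h : w ∈ D.BigB) : w ∉ D.B :=
  fun hB => B_not_BigB C hB h

lemma xi_status (C : Ctx S D) {a b : ℤ} (hb : D.IsBlock a b) :
    D.IsSupport (D.Xi a (b - a)) ∨ D.IsRigidI (D.Xi a (b - a)) ∨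
      ∃ x, D.IsSuppToRigid (D.Xi a (b - a)) x := by
  obtain ⟨_, _, _, _, hty⟩ := (C.hblk a b hb).1
  rcases hty with ⟨_,_,_,h⟩|⟨_,_,_,h⟩|⟨_,_,_,h⟩|⟨_,_,_,_,_,h⟩|⟨_,_,_,_,_,h⟩|
    ⟨_,_,_,_,_,h⟩|⟨_,_,_,_,_,h⟩|⟨_,_,_,_,_,_,_,h⟩
  · exact Or.inl h
  · exact Or.inr (Or.inl h)
  · rcases h with h | h | ⟨x, _, hx⟩
    · exact Or.inl h
    · exact Or.inr (Or.inl h)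
    · exact Or.inr (Or.inr ⟨x, hx⟩)
  · exact Or.inr (Or.inl h)
  · exact Or.inl h
  · rcases h with h | ⟨x, _, hx⟩
    · exact Or.inr (Or.inl h)
    · exact Or.inr (Or.inr ⟨x, hx⟩)
  · rcases h with h | ⟨x, _, hx⟩
    · exact Or.inl h
    · exact Or.inr (Or.inr ⟨x, hx⟩)
  · obtain ⟨x, _, hx⟩ := h
    exact Or.inr (Or.inr ⟨x, hx⟩)

lemma xiLo_not_BigB (C : Ctx S D) {a' b' : ℤ} (hb' : D.IsBlock a' b') :
    D.xiLo a' ∉ D.BigB := by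
  intro hc
  obtain ⟨i, hi1, hi2, hi3⟩ := BigB_local C hb' hc le_rfl (xi_nonempty hb')
  have h2a := hb'.1
  have hbp := hb'.2.1
  have hXi := X_ne_of_run hb' hi1 hi2
  have hXa := X_ne_of_run hb' le_rfl hb'.2.2.1
  have hxl := (xiLo_le_s hXa).1
  have hsle : S.s (a' - 1) ≤ S.s (i - 1) := by
    have := s_le (S := S) (i := a' - 1) (j := i - 1) (by omega) (by omega) (by omega)
    omega
  have hhl := hi_le (D := D) i
  rcases parity_cases i with ⟨ho, _⟩ | ⟨he, _⟩
  · rw [mem_BI_odd ho] at hi3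
    have := s_step (S := S) (i := i) (by omega) (by omega)
    omega
  · rw [mem_BI_even he] at hi3
    have := s_step_even (S := S) (i := i) (by omega) (by omega) he
    omega

lemma theta_step {I : Finset ℤ} (hg : D.GoodTheta I) (hBig : ∀ w ∈ I, w ∉ D.BigB)
    {u : ℤ} (hu : u ∈ D.B) (huI : u ∈ I) (hnext : u + 1 ∈ I) : u + 1 ∈ D.B := by
  rcases hg with hrig | hsup | ⟨x0, hr2s⟩
  · exact (inter_empty hrig.1 hu huI).elim
  · have h : u + 1 ∈ I \ D.BigB := Finset.mem_sdiff.2 ⟨hnext, hBig _ hnext⟩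
    rw [← hsup.2] at h
    exact (Finset.mem_inter.1 h).1
  · have hx : u ∈ D.B ∩ I := Finset.mem_inter.2 ⟨hu, huI⟩
    rw [hr2s.2.2.2.1, Finset.mem_filter] at hx
    have h : u + 1 ∈ D.B ∩ I := by
      rw [hr2s.2.2.2.1, Finset.mem_filter]
      exact ⟨hnext, by omega⟩
    exact (Finset.mem_inter.1 h).1

/-- Entering the `Ξ` of a block from the left. -/
lemma enterXi (C : Ctx S D) {a' b' : ℤ} (hb' : D.IsBlock a' b') :
    D.xiLo a' ∈ D.B ∨
    (D.IsRigidI (D.Xi a' (b' - a')) ∧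
      ∃ F, (∀ w, D.xiLo a' ≤ w → w ≤ F → w ∉ D.R ∧ w ∉ D.B) ∧
        ((Odd a' ∧ F = S.s (a' - 1)) ∨
         (Even a' ∧ F = S.s (a' - 1) + S.l - D.lo a' - 1))) := by
  have hXa' := X_ne_of_run hb' le_rfl hb'.2.2.1
  have hXb' := X_ne_of_run hb' hb'.2.2.1 le_rfl
  have h2a := hb'.1
  have hbp := hb'.2.1
  have hab := hb'.2.2.1
  have hmemLo : D.xiLo a' ∈ D.Xi a' (b' - a') := mem_Xi_blk.2 ⟨le_rfl, xi_nonempty hb'⟩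
  rcases xi_status C hb' with hsup | hrig | ⟨x0, hs⟩
  · left
    have h : D.xiLo a' ∈ D.Xi a' (b' - a') \ D.BigB :=
      Finset.mem_sdiff.2 ⟨hmemLo, xiLo_not_BigB C hb'⟩
    rw [← hsup.2] at h
    exact (Finset.mem_inter.1 h).1
  · right
    refine ⟨hrig, ?_⟩
    have hlol := lo_lt_l hXa'
    have hlog := lo_ge (D := D) a'
    have hsXiHi := (s_le_xiHi hXb').1
    have hsab : S.s a' ≤ S.s b' := by
      have := s_le (S := S) (i := a') (j := b') (by omega) hab hbp
      omega
    rcases parity_cases a' with ⟨ho, _⟩ | ⟨he, _⟩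
    · refine ⟨S.s (a' - 1), ?_, Or.inl ⟨ho, rfl⟩⟩
      intro w hw1 hw2
      have hwRI : w ∈ D.RI a' := by
        rw [mem_RI_odd ho]
        rw [xiLo_odd ho] at hw1
        omega
      have hwXi : w ∈ D.Xi a' (b' - a') := by
        rw [mem_Xi_blk]
        have hstep := s_step (S := S) (i := a') (by omega) (by omega)
        exact ⟨hw1, by omega⟩
      constructor
      · exact not_R_of_BigR C (mem_BigR.2 ⟨a', by omega, by omega, hwRI⟩)
      · intro hB
        exact inter_empty hrig.1 hB hwXi
    · refine ⟨S.s (a' - 1) + S.l - D.lo a' - 1, ?_, Or.inr ⟨he, rfl⟩⟩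
      intro w hw1 hw2
      have hwRI : w ∈ D.RI a' := by
        rw [mem_RI_even he]
        rw [xiLo_even he] at hw1
        omega
      have hwXi : w ∈ D.Xi a' (b' - a') := by
        rw [mem_Xi_blk]
        have hstep := s_step_even (S := S) (i := a') (by omega) (by omega) he
        exact ⟨hw1, by omega⟩
      constructor
      · exact not_R_of_BigR C (mem_BigR.2 ⟨a', by omega, by omega, hwRI⟩)
      · intro hB
        exact inter_empty hrig.1 hB hwXi
  · left
    obtain ⟨w0, hw0⟩ := hs.2.2.1
    have hw0' := hw0
    rw [hs.2.1, Finset.mem_filter] at hw0'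
    have hw0Xi := hw0'.1
    rw [mem_Xi_blk] at hw0Xi
    have h : D.xiLo a' ∈ D.B ∩ D.Xi a' (b' - a') := by
      rw [hs.2.1, Finset.mem_filter]
      exact ⟨hmemLo, by omega⟩
    exact (Finset.mem_inter.1 h).1

/-- Continuation after the top of a support block whose tail chunk is short. -/
lemma after_block (C : Ctx S D) {a b u : ℤ} (hb : D.IsBlock a b)
    (hsup : D.IsSupport (D.Xi a (b - a)))
    (hwin : ∀ w, u < w → w ≤ D.xiHi b → w ∉ D.R ∧ w ∉ D.B)
    (hu : u ∈ D.B)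
    (hdata : (Odd b ∧ u = S.s b - 1 ∧ D.hi b ≤ S.l - 2) ∨
             (Even b ∧ u = S.s b - D.hi b ∧ D.hi b ≤ S.l - 2))
    (hFT3 : ¬ D.FullType3 a b) :
    ∃ c, u < c ∧ (∀ w, u < w → w < c → w ∉ D.R ∧ w ∉ D.B) ∧
      (c ∈ D.B ∨ u + S.l ≤ c) := by
  have hXb := X_ne_of_run hb hb.2.2.1 le_rfl
  have h2a := hb.1
  have hbp := hb.2.1
  have hab := hb.2.2.1
  have hhib := hi_pos hXb
  have huxi : u < D.xiHi b := by
    rcases hdata with ⟨ho, he1, he2⟩ | ⟨he, he1, he2⟩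
    · rw [xiHi_odd ho]; omega
    · rw [xiHi_even he]; omega
  have hl2 := S.hl
  rcases next_block hb with hlb | ⟨a', b', hcb⟩
  · -- last block
    rcases le_or_gt S.n (D.xiHi b) with hn | hn
    · refine ⟨u + S.l, by omega, ?_, Or.inr le_rfl⟩
      intro w hw1 hw2
      rcases le_or_gt w (D.xiHi b) with h | h
      · exact hwin w hw1 h
      · constructor
        · intro hR
          have := D.hR hR
          rw [Finset.mem_Icc] at this
          omega
        · intro hB
          have := D.hB hB
          rw [Finset.mem_Icc] at this
          omega
    · have hsupI := (C.hsl a b hlb hsup).resolve_right hFT3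
      refine ⟨D.xiHi b + 1, by omega, ?_, Or.inl ?_⟩
      · intro w hw1 hw2
        exact hwin w hw1 (by omega)
      · have hmem : D.xiHi b + 1 ∈ Finset.Icc (D.xiHi b + 1) S.n := by
          rw [Finset.mem_Icc]; omega
        have hBig := (no_Big_thetal C hlb (show D.xiHi b < D.xiHi b + 1 by omega)).1
        have h : D.xiHi b + 1 ∈ Finset.Icc (D.xiHi b + 1) S.n \ D.BigB :=
          Finset.mem_sdiff.2 ⟨hmem, hBig⟩
        rw [← hsupI.2] at h
        exact (Finset.mem_inter.1 h).1
  · -- there is a following block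
    have hba' := hcb.2.2.1
    have hord := xi_ordered C hb hcb.2.1 hba'
    rcases le_or_gt (D.xiLo a') (D.xiHi b + 1) with hemp | hnemp
    · -- the Θ between is empty : xiLo a' = xiHi b + 1
      have heq : D.xiLo a' = D.xiHi b + 1 := by omega
      rcases enterXi C hcb.2.1 with hB | ⟨hrig, F, hF, hpar⟩
      · refine ⟨D.xiLo a', by omega, ?_, Or.inl hB⟩
        intro w hw1 hw2
        exact hwin w hw1 (by omega)
      · -- the hard arithmetic case
        have hXa' := X_ne_of_run hcb.2.1 le_rfl hcb.2.1.2.2.1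
        have hlo' := lo_ge (D := D) a'
        have hlo'l := lo_lt_l hXa'
        have ha'2 : b + 2 ≤ a' := by
          rcases eq_or_lt_of_le (show b + 1 ≤ a' by omega) with h | h
          · exfalso
            have hXe := hb.2.2.2.2.2
            rw [h] at hXe
            rw [hXe] at hXa'
            exact absurd hXa' (by simp)
          · omega
        have ha'p : a' ≤ S.p := by have := hcb.2.1.2.1; have := hcb.2.1.2.2.1; omega
        rcases hdata with ⟨hob, he1, he2⟩ | ⟨heb, he1, he2⟩
        · -- b odd
          rw [xiHi_odd hob] at heq hwin
          rcases hpar with ⟨hoa', hFv⟩ | ⟨hea', hFv⟩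
          · -- a' odd : safe
            have hjump := s_jump_odd (S := S) (i := b) (j := a' - 1) (by omega) hob
              (by omega) (by omega)
            rw [xiLo_odd hoa'] at heq
            refine ⟨u + S.l, by omega, ?_, Or.inr le_rfl⟩
            intro w hw1 hw2
            rcases le_or_gt w (S.s b + D.hi b - 1) with h | h
            · exact hwin w hw1 h
            · refine hF w ?_ ?_
              · rw [xiLo_odd hoa']; omega
              · omega
          · -- a' even : impossible
            exfalso
            have hjump := s_jump_odd (S := S) (i := b) (j := a' - 1) (by omega) hob
              (by omega) (by omega)
            rw [xiLo_even hea'] at heq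
            omega
        · -- b even
          rw [xiHi_even heb] at heq hwin
          rcases hpar with ⟨hoa', hFv⟩ | ⟨hea', hFv⟩
          · -- a' odd : impossible (two steps)
            exfalso
            have hj2 : a' - 1 ≥ b + 2 := by
              have h1 := Int.even_iff.mp heb
              have h2 := Int.odd_iff.mp hoa'
              omega
            have := s_two_steps (S := S) (i := b) (j := a' - 1) (by omega) (by omega)
              (by omega)
            rw [xiLo_odd hoa'] at heq
            omega
          · -- a' even : impossible (one step ≥ 2)
            exfalso
            have := s_le (S := S) (i := b) (j := a' - 1) (by omega) (by omega) (by omega)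
            rw [xiLo_even hea'] at heq
            omega
    · -- the Θ between is nonempty
      have hsupI := (C.hsm a b a' b' hcb hsup).resolve_right hFT3
      refine ⟨D.xiHi b + 1, by omega, ?_, Or.inl ?_⟩
      · intro w hw1 hw2
        exact hwin w hw1 (by omega)
      · have hmem : D.xiHi b + 1 ∈ Finset.Icc (D.xiHi b + 1) (D.xiLo a' - 1) := by
          rw [Finset.mem_Icc]; omega
        have hBig := (no_Big_thetam C hcb (show D.xiHi b < D.xiHi b + 1 by omega)
          (show D.xiHi b + 1 < D.xiLo a' by omega)).1
        have h : D.xiHi b + 1 ∈ Finset.Icc (D.xiHi b + 1) (D.xiLo a' - 1) \ D.BigB :=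
          Finset.mem_sdiff.2 ⟨hmem, hBig⟩
        rw [← hsupI.2] at h
        exact (Finset.mem_inter.1 h).1

end Aux10

namespace Aux10

open Finset

variable {S : NakSetup} {D : CDatum S}


lemma support_block_even (C : Ctx S D) {a u : ℤ} (hb : D.IsBlock a (a + 1))
    (hsup : D.IsSupport (D.Xi a (a + 1 - a))) (hu : u ∈ D.B)
    (h1 : D.xiLo a ≤ u) (h2 : u ≤ D.xiHi (a + 1)) (hnotB : u ∉ D.BigB)
    (hB1 : u + 1 ∉ D.B) {i0 : ℤ} (hmem0 : u + 1 ∈ D.BI i0)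
    (hnotBI : ∀ i, u ∉ D.BI i) (hi0a : a ≤ i0) (hi0b : i0 ≤ a + 1)
    (hea : Even a) (hhi1 : D.hi (a + 1) ≤ S.l - 2) :
    ∃ c, u < c ∧ (∀ w, u < w → w < c → w ∉ D.R ∧ w ∉ D.B) ∧
      (c ∈ D.B ∨ u + S.l ≤ c) := by
  have hXa := X_ne_of_run hb le_rfl hb.2.2.1
  have hXa1 := X_ne_of_run hb (j := a + 1) (by omega) le_rfl
  have h2a := hb.1
  have hbp := hb.2.1
  have hl2 := S.hl
  have hoa1 : Odd (a + 1) := Even.add_one hea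
  have hstep := s_step (S := S) (i := a + 1) (by omega) (by omega)
  rw [show a + 1 - 1 = a by ring] at hstep
  have hxiHi : D.xiHi (a + 1) = S.s (a + 1) + D.hi (a + 1) - 1 := xiHi_odd hoa1
  have hhi1p := hi_pos hXa1
  have hhia := hi_pos hXa
  have hhial := hi_le (D := D) a
  have hFT3 : ¬ D.FullType3 a (a + 1) := by
    intro hF
    have := hF.1
    omega
  rcases (by omega : i0 = a ∨ i0 = a + 1) with hieq | hieq <;> rw [hieq] at hmem0
  · -- the chunk `BI a`, which is internal
    rw [mem_BI_even hea] at hmem0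
    have hnota := hnotBI a
    rw [mem_BI_even hea] at hnota
    rw [hxiHi] at h2
    have hcXi : S.s a + 1 ∈ D.Xi a (a + 1 - a) := by
      rw [mem_Xi_blk]
      exact ⟨by omega, by rw [hxiHi]; omega⟩
    have hcB : S.s a + 1 ∈ D.B := by
      by_contra hcB
      have hcBig : S.s a + 1 ∈ D.BigB := by
        by_contra hc2
        have h := Finset.mem_sdiff.2 ⟨hcXi, hc2⟩
        rw [← hsup.2] at h
        exact hcB (Finset.mem_inter.1 h).1
      obtain ⟨i1, hi11, hi12, hm1⟩ := BigB_local C hb hcBig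
        (by omega) (by rw [hxiHi]; omega)
      rcases (by omega : i1 = a ∨ i1 = a + 1) with h' | h' <;> rw [h'] at hm1
      · rw [mem_BI_even hea] at hm1
        omega
      · rw [mem_BI_odd hoa1] at hm1
        omega
    refine ⟨S.s a + 1, by omega, ?_, Or.inl hcB⟩
    intro w hw1 hw2
    constructor
    · intro hR
      exact inter_empty hsup.1 hR (mem_Xi_blk.2 ⟨by omega, by rw [hxiHi]; omega⟩)
    · exact not_B_of_BigB C (mem_BigB.2 ⟨a, by omega, by omega,
        by rw [mem_BI_even hea]; omega⟩)
  · -- the chunk `BI (a+1)`, the tail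
    rw [mem_BI_odd hoa1] at hmem0
    have hnota1 := hnotBI (a + 1)
    rw [mem_BI_odd hoa1] at hnota1
    rw [hxiHi] at h2
    refine after_block C hb hsup ?_ hu (Or.inl ⟨hoa1, by omega, by omega⟩) hFT3
    intro w hw1 hw2
    rw [hxiHi] at hw2
    constructor
    · intro hR
      exact inter_empty hsup.1 hR (mem_Xi_blk.2 ⟨by omega, by rw [hxiHi]; omega⟩)
    · exact not_B_of_BigB C (mem_BigB.2 ⟨a + 1, by omega, by omega,
        by rw [mem_BI_odd hoa1]; omega⟩)

lemma support_block (C : Ctx S D) {a b u : ℤ} (hb : D.IsBlock a b)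
    (hsup : D.IsSupport (D.Xi a (b - a))) (hu : u ∈ D.B)
    (h1 : D.xiLo a ≤ u) (h2 : u ≤ D.xiHi b) :
    ∃ c, u < c ∧ (∀ w, u < w → w < c → w ∉ D.R ∧ w ∉ D.B) ∧
      (c ∈ D.B ∨ u + S.l ≤ c) := by
  have hnotB : u ∉ D.BigB := B_not_BigB C hu
  have hXa := X_ne_of_run hb le_rfl hb.2.2.1
  have hXb := X_ne_of_run hb hb.2.2.1 le_rfl
  have h2a := hb.1
  have hbp := hb.2.1
  have hab := hb.2.2.1
  have hl2 := S.hl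
  have hhibp := hi_pos hXb
  have hhibl := hi_le (D := D) b
  have huXi : u ∈ D.Xi a (b - a) := mem_Xi_blk.2 ⟨h1, h2⟩
  have htop : D.xiHi b ∈ D.BI b := by
    rcases parity_cases b with ⟨ho, _⟩ | ⟨he, _⟩
    · rw [mem_BI_odd ho, xiHi_odd ho]; omega
    · rw [mem_BI_even he, xiHi_even he]; omega
  have hne : u ≠ D.xiHi b := by
    intro h
    exact hnotB (mem_BigB.2 ⟨b, by omega, by omega, by rw [h]; exact htop⟩)
  by_cases hB1 : u + 1 ∈ D.B
  · refine ⟨u + 1, by omega, ?_, Or.inl hB1⟩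
    intro w hw1 hw2
    exact absurd hw1 (by omega)
  have hu1Big : u + 1 ∈ D.BigB := by
    by_contra hc
    have h : u + 1 ∈ D.Xi a (b - a) \ D.BigB :=
      Finset.mem_sdiff.2 ⟨mem_Xi_blk.2 ⟨by omega, by omega⟩, hc⟩
    rw [← hsup.2] at h
    exact hB1 (Finset.mem_inter.1 h).1
  obtain ⟨i0, hi0a, hi0b, hmem0⟩ := BigB_local C hb hu1Big (by omega) (by omega)
  have hnotBI : ∀ i, u ∉ D.BI i := by
    intro i hc
    by_cases hr : 2 ≤ i ∧ i ≤ S.p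
    · exact hnotB (mem_BigB.2 ⟨i, hr.1, hr.2, hc⟩)
    · rw [BI_empty (D.hXout i hr)] at hc
      exact absurd hc (by simp)
  obtain ⟨_, _, _, _, hty⟩ := (C.hblk a b hb).1
  rcases hty with ⟨hk,hlo,hhic,_⟩|⟨hk,hlo,hhi,hrig⟩|⟨hk,hlo,hhi,_⟩|
    ⟨hk,hodd,hg1,hg2,hm,hrig⟩|⟨hk,hea,hg1,hg2,hm,_⟩|⟨hk,hodd,hg1,hg2,hm,hst⟩|
    ⟨hk,hea,hg1,hg2,hm,_⟩|⟨hk,hd2,hea,hg1,hg2,hg3,hg4,hex⟩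
  · -- type I : tail
    have hba : a = b := by omega
    rw [hba] at hlo hhic
    have hi0 : i0 = b := by omega
    rw [hi0] at hmem0
    have hFT3 : ¬ D.FullType3 a b := by
      intro hF
      have h3 := hF.2.2.1
      rw [hba] at h3
      omega
    rcases parity_cases b with ⟨hob, _⟩ | ⟨heb, _⟩
    · rw [mem_BI_odd hob] at hmem0
      have hnota := hnotBI b
      rw [mem_BI_odd hob] at hnota
      rw [xiHi_odd hob] at h2
      refine after_block C hb hsup ?_ hu (Or.inl ⟨hob, by omega, by omega⟩) hFT3
      intro w hw1 hw2
      rw [xiHi_odd hob] at hw2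
      constructor
      · intro hR
        exact inter_empty hsup.1 hR (mem_Xi_blk.2 ⟨by omega, by rw [xiHi_odd hob]; omega⟩)
      · exact not_B_of_BigB C (mem_BigB.2 ⟨b, by omega, by omega,
          by rw [mem_BI_odd hob]; omega⟩)
    · rw [mem_BI_even heb] at hmem0
      have hnota := hnotBI b
      rw [mem_BI_even heb] at hnota
      rw [xiHi_even heb] at h2
      refine after_block C hb hsup ?_ hu (Or.inr ⟨heb, by omega, by omega⟩) hFT3
      intro w hw1 hw2
      rw [xiHi_even heb] at hw2
      constructor
      · intro hR
        exact inter_empty hsup.1 hR (mem_Xi_blk.2 ⟨by omega, by rw [xiHi_even heb]; omega⟩)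
      · exact not_B_of_BigB C (mem_BigB.2 ⟨b, by omega, by omega,
          by rw [mem_BI_even heb]; omega⟩)
  · exact (inter_empty hrig.1 hu huXi).elim
  · -- type III : internal long chunk
    have hba : a = b := by omega
    rw [hba] at hlo hhi
    have hi0 : i0 = b := by omega
    rw [hi0] at hmem0
    refine ⟨u + S.l, by omega, ?_, Or.inr le_rfl⟩
    intro w hw1 hw2
    rcases parity_cases b with ⟨hob, _⟩ | ⟨heb, _⟩
    · rw [mem_BI_odd hob] at hmem0
      have hnota := hnotBI b
      rw [mem_BI_odd hob] at hnota
      rw [xiHi_odd hob] at h2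
      constructor
      · intro hR
        exact inter_empty hsup.1 hR (mem_Xi_blk.2 ⟨by omega, by rw [xiHi_odd hob]; omega⟩)
      · exact not_B_of_BigB C (mem_BigB.2 ⟨b, by omega, by omega,
          by rw [mem_BI_odd hob]; omega⟩)
    · rw [mem_BI_even heb] at hmem0
      have hnota := hnotBI b
      rw [mem_BI_even heb] at hnota
      rw [xiHi_even heb] at h2
      constructor
      · intro hR
        exact inter_empty hsup.1 hR (mem_Xi_blk.2 ⟨by omega, by rw [xiHi_even heb]; omega⟩)
      · exact not_B_of_BigB C (mem_BigB.2 ⟨b, by omega, by omega,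
          by rw [mem_BI_even heb]; omega⟩)
  · exact (inter_empty hrig.1 hu huXi).elim
  · -- type V
    obtain rfl : b = a + 1 := by omega
    exact support_block_even C hb hsup hu h1 h2 hnotB hB1 hmem0 hnotBI hi0a hi0b hea
      (by
        have hma := full_at C hb (i := a) (by omega) (by omega)
        have hm1 := full_at C hb (i := a + 1) (by omega) (by omega)
        have := m_pos hXa
        have := m_pos (X_ne_of_run hb (j := a + 1) (by omega) (by omega))
        omega)
  · -- type VI
    rcases hst with hrig | ⟨x, _, hs⟩
    · exact (inter_empty hrig.1 hu huXi).elim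
    · obtain ⟨r, hr⟩ := hs.2.2.2.2
      rw [Finset.mem_inter] at hr
      exact (inter_empty hsup.1 hr.1 hr.2).elim
  · -- type VII
    obtain rfl : b = a + 1 := by omega
    exact support_block_even C hb hsup hu h1 h2 hnotB hB1 hmem0 hnotBI hi0a hi0b hea
      (by
        have hma := full_at C hb (i := a) (by omega) (by omega)
        have hm1 := full_at C hb (i := a + 1) (by omega) (by omega)
        have := m_pos hXa
        have := m_pos (X_ne_of_run hb (j := a + 1) (by omega) (by omega))
        omega)
  · -- type VIII
    obtain ⟨x, _, hs⟩ := hex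
    obtain ⟨r, hr⟩ := hs.2.2.2.2
    rw [Finset.mem_inter] at hr
    exact (inter_empty hsup.1 hr.1 hr.2).elim

end Aux10

namespace Aux10

open Finset

variable {S : NakSetup} {D : CDatum S}

lemma L1 (C : Ctx S D) {u : ℤ} (hu : u ∈ D.B) :
    ∃ c, u < c ∧ (∀ w, u < w → w < c → w ∉ D.R ∧ w ∉ D.B) ∧
      (c ∈ D.B ∨ u + S.l ≤ c) := by
  have hun : 1 ≤ u ∧ u ≤ S.n := by
    have := D.hB hu
    rw [Finset.mem_Icc] at this
    exact this
  have hl2 := S.hl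
  rcases locate C hun.1 hun.2 with ⟨a, b, hb, h1, h2⟩ | ⟨a, b, hfb, h1⟩ |
    ⟨a, b, a', b', hcb, h1, h2⟩ | ⟨a, b, hlb, h1⟩
  · -- inside the Ξ of a block
    have huXi : u ∈ D.Xi a (b - a) := mem_Xi_blk.2 ⟨h1, h2⟩
    rcases xi_status C hb with hsup | hrig | ⟨x0, hs⟩
    · exact support_block C hb hsup hu h1 h2
    · exact (inter_empty hrig.1 hu huXi).elim
    · have hux : u ≤ x0 := by
        have h := Finset.mem_inter.2 ⟨hu, huXi⟩
        rw [hs.2.1, Finset.mem_filter] at h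
        exact h.2
      rcases eq_or_lt_of_le hux with heq | hlt
      · obtain ⟨r, hr⟩ := hs.2.2.2.2
        have hr' := hr
        rw [hs.2.2.2.1, Finset.mem_filter] at hr'
        have hrXi := hr'.1
        rw [mem_Xi_blk] at hrXi
        refine ⟨u + S.l, by omega, ?_, Or.inr le_rfl⟩
        intro w hw1 hw2
        have hwXi : w ∈ D.Xi a (b - a) := mem_Xi_blk.2 ⟨by omega, by omega⟩
        constructor
        · intro hR
          have h := Finset.mem_inter.2 ⟨hR, hwXi⟩
          rw [hs.2.2.2.1, Finset.mem_filter] at h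
          omega
        · intro hB
          have h := Finset.mem_inter.2 ⟨hB, hwXi⟩
          rw [hs.2.1, Finset.mem_filter] at h
          omega
      · have hx0Xi := hs.1
        rw [mem_Xi_blk] at hx0Xi
        have h : u + 1 ∈ D.B ∩ D.Xi a (b - a) := by
          rw [hs.2.1, Finset.mem_filter]
          exact ⟨mem_Xi_blk.2 ⟨by omega, by omega⟩, by omega⟩
        refine ⟨u + 1, by omega, ?_, Or.inl (Finset.mem_inter.1 h).1⟩
        intro w hw1 hw2
        exact absurd hw1 (by omega)
  · -- Θ before the first block
    have hg := C.hth0 a b hfb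
    have huI : u ∈ Finset.Icc 1 (D.xiLo a - 1) := by rw [Finset.mem_Icc]; omega
    have hBig : ∀ w ∈ Finset.Icc 1 (D.xiLo a - 1), w ∉ D.BigB := by
      intro w hw
      rw [Finset.mem_Icc] at hw
      exact (no_Big_theta0 C hfb hw.2).1
    by_cases hnext : u + 1 ∈ Finset.Icc 1 (D.xiLo a - 1)
    · refine ⟨u + 1, by omega, ?_, Or.inl (theta_step hg hBig hu huI hnext)⟩
      intro w hw1 hw2
      exact absurd hw1 (by omega)
    · have hutop : u = D.xiLo a - 1 := by
        have h' : ¬(1 ≤ u + 1 ∧ u + 1 ≤ D.xiLo a - 1) := fun hc =>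
          hnext (Finset.mem_Icc.2 hc)
        omega
      rcases enterXi C hfb.1 with hB | ⟨hrig, F, hF, hpar⟩
      · refine ⟨D.xiLo a, by omega, ?_, Or.inl hB⟩
        intro w hw1 hw2
        exact absurd hw1 (by omega)
      · rcases C.hr0 a b hfb hrig with hrigI | hFT3
        · exact (inter_empty hrigI.1 hu huI).elim
        · have hlo1 := hFT3.2.1
          have hFval : F = u + S.l - 1 := by
            rcases hpar with ⟨ho, hFv⟩ | ⟨he, hFv⟩
            · rw [xiLo_odd ho] at hutop
              omega
            · rw [xiLo_even he] at hutop
              omega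
          refine ⟨u + S.l, by omega, ?_, Or.inr le_rfl⟩
          intro w hw1 hw2
          exact hF w (by omega) (by omega)
  · -- Θ between two consecutive blocks
    have hg := C.hthm a b a' b' hcb
    have huI : u ∈ Finset.Icc (D.xiHi b + 1) (D.xiLo a' - 1) := by
      rw [Finset.mem_Icc]; omega
    have hBig : ∀ w ∈ Finset.Icc (D.xiHi b + 1) (D.xiLo a' - 1), w ∉ D.BigB := by
      intro w hw
      rw [Finset.mem_Icc] at hw
      exact (no_Big_thetam C hcb (by omega) (by omega)).1
    by_cases hnext : u + 1 ∈ Finset.Icc (D.xiHi b + 1) (D.xiLo a' - 1)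
    · refine ⟨u + 1, by omega, ?_, Or.inl (theta_step hg hBig hu huI hnext)⟩
      intro w hw1 hw2
      exact absurd hw1 (by omega)
    · have hutop : u = D.xiLo a' - 1 := by
        have h' : ¬(D.xiHi b + 1 ≤ u + 1 ∧ u + 1 ≤ D.xiLo a' - 1) := fun hc =>
          hnext (Finset.mem_Icc.2 hc)
        omega
      rcases enterXi C hcb.2.1 with hB | ⟨hrig, F, hF, hpar⟩
      · refine ⟨D.xiLo a', by omega, ?_, Or.inl hB⟩
        intro w hw1 hw2
        exact absurd hw1 (by omega)
      · rcases C.hrm a b a' b' hcb hrig with hrigI | hFT3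
        · exact (inter_empty hrigI.1 hu huI).elim
        · have hlo1 := hFT3.2.1
          have hFval : F = u + S.l - 1 := by
            rcases hpar with ⟨ho, hFv⟩ | ⟨he, hFv⟩
            · rw [xiLo_odd ho] at hutop
              omega
            · rw [xiLo_even he] at hutop
              omega
          refine ⟨u + S.l, by omega, ?_, Or.inr le_rfl⟩
          intro w hw1 hw2
          exact hF w (by omega) (by omega)
  · -- Θ after the last block
    have hg := C.hthl a b hlb
    have huI : u ∈ Finset.Icc (D.xiHi b + 1) S.n := by rw [Finset.mem_Icc]; omega
    have hBig : ∀ w ∈ Finset.Icc (D.xiHi b + 1) S.n, w ∉ D.BigB := by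
      intro w hw
      rw [Finset.mem_Icc] at hw
      exact (no_Big_thetal C hlb (by omega)).1
    by_cases hnext : u + 1 ∈ Finset.Icc (D.xiHi b + 1) S.n
    · refine ⟨u + 1, by omega, ?_, Or.inl (theta_step hg hBig hu huI hnext)⟩
      intro w hw1 hw2
      exact absurd hw1 (by omega)
    · have hun' : u = S.n := by
        have h' : ¬(D.xiHi b + 1 ≤ u + 1 ∧ u + 1 ≤ S.n) := fun hc =>
          hnext (Finset.mem_Icc.2 hc)
        omega
      refine ⟨u + S.l, by omega, ?_, Or.inr le_rfl⟩
      intro w hw1 hw2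
      constructor
      · intro hR
        have := D.hR hR
        rw [Finset.mem_Icc] at this
        omega
      · intro hB
        have := D.hB hB
        rw [Finset.mem_Icc] at this
        omega

lemma part_a (C : Ctx S D) : ∀ x ∈ D.B, ∀ y ∈ D.R, x < y →
    ∃ z, x < z ∧ z + S.l - 2 < y ∧
      Finset.Icc z (z + S.l - 2) ∩ (D.R ∪ D.B) = ∅ := by
  intro x hx y hy hxy
  classical
  have hxB : x ∈ D.B ∩ Finset.Icc x (y - 1) := by
    rw [Finset.mem_inter, Finset.mem_Icc]
    exact ⟨hx, le_rfl, by omega⟩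
  set x' := (D.B ∩ Finset.Icc x (y - 1)).max' ⟨x, hxB⟩ with hx'def
  have hx'mem : x' ∈ D.B ∩ Finset.Icc x (y - 1) := Finset.max'_mem _ _
  have hxx' := Finset.le_max' _ x hxB
  rw [Finset.mem_inter, Finset.mem_Icc] at hx'mem
  have hx'max : ∀ w, w ∈ D.B → x ≤ w → w ≤ y - 1 → w ≤ x' := fun w h1 h2 h3 =>
    Finset.le_max' _ w (by rw [Finset.mem_inter, Finset.mem_Icc]; exact ⟨h1, h2, h3⟩)
  obtain ⟨c, hc1, hc2, hc3⟩ := L1 C hx'mem.1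
  have hyc : c ≤ y := by
    by_contra hcy
    push_neg at hcy
    exact (hc2 y (by omega) (by omega)).1 hy
  rcases hc3 with hcB | hcl
  · exfalso
    rcases eq_or_lt_of_le hyc with h | h
    · rw [h] at hcB
      exact (Finset.disjoint_left.mp D.hRB hy) hcB
    · have := hx'max c hcB (by omega) (by omega)
      omega
  · refine ⟨x' + 1, by omega, by omega, ?_⟩
    rw [Finset.eq_empty_iff_forall_notMem]
    intro w hw
    rw [Finset.mem_inter, Finset.mem_Icc, Finset.mem_union] at hw
    have hwin := hc2 w (by omega) (by omega)
    rcases hw.2 with h | h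
    · exact hwin.1 h
    · exact hwin.2 h

lemma all_X_empty (hT : D.T = ∅) : ∀ i, D.X i = ∅ := by
  intro i
  by_cases h : 2 ≤ i ∧ i ≤ S.p
  · by_contra hc
    replace hc := Finset.nonempty_iff_ne_empty.mpr hc
    have : i ∈ D.T := by
      unfold CDatum.T
      rw [Finset.mem_filter, Finset.mem_Icc]
      exact ⟨h, hc⟩
    rw [hT] at this
    exact absurd this (by simp)
  · exact D.hXout i h

end Aux10

theorem stmt10' {S : NakSetup} (D : CDatum S) (h : D.WellConfigured) : D.Rigid := by
  have hl2 := S.hl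
  rcases h with ⟨hT, x0, hx0a, hx0b, hR, hB⟩ | ⟨hT, h2, h3, h4, h5, h6, h7, h8, h9, h10⟩
  · -- T = ∅
    have hXe := Aux10.all_X_empty hT
    refine ⟨?_, ?_, ?_, ?_⟩
    · intro x hx y hy hxy
      rw [hB, Finset.mem_Icc] at hx
      rw [hR, Finset.mem_Icc] at hy
      exact absurd hxy (by omega)
    · intro i h2i hip hoi
      have e1 := Aux10.hi_empty (D := D) (hXe (i - 1))
      have e2 := Aux10.hi_empty (D := D) (hXe i)
      have e3 := Aux10.lo_empty (D := D) (hXe i)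
      have e4 := Aux10.lo_empty (D := D) (hXe (i + 1))
      have e5 := Aux10.lo_empty (D := D) (hXe (i + 2))
      have e6 := Aux10.hi_empty (D := D) (hXe (i - 2))
      exact ⟨by omega, by omega, fun _ => ⟨by omega, by omega⟩⟩
    · intro i h2i hip hei
      have e1 := Aux10.hi_empty (D := D) (hXe i)
      have e2 := Aux10.hi_empty (D := D) (hXe (i + 1))
      have e3 := Aux10.lo_empty (D := D) (hXe (i - 1))
      have e4 := Aux10.lo_empty (D := D) (hXe i)
      exact ⟨by omega, by omega⟩
    · intro i h2i hip
      constructor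
      · rw [Aux10.RI_empty (hXe i)]
        exact Finset.inter_empty _
      · rw [Aux10.BI_empty (hXe i)]
        exact Finset.inter_empty _
  · have C : Aux10.Ctx S D := ⟨hT, h2, h3, h4, h5, h6, h7, h8, h9, h10⟩
    refine ⟨Aux10.part_a C, ?_, ?_, fun i hi1 hi2 => Aux10.part_b3 C i hi1 hi2⟩
    · intro i h2i hip hoi
      refine ⟨?_, ?_, ?_⟩
      · by_cases hXi : (D.X i).Nonempty
        · by_cases hXi1 : (D.X (i - 1)).Nonempty
          · have hev : Even (i - 1) := by
              rcases hoi with ⟨t, ht⟩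
              exact ⟨t, by omega⟩
            have := Aux10.adj_even C hXi1
              (by rw [show i - 1 + 1 = i by ring]; exact hXi) hev
            rw [show i - 1 + 1 = i by ring] at this
            exact this
          · rw [Aux10.hi_empty (Finset.not_nonempty_iff_eq_empty.mp hXi1)]
            have := Aux10.hi_le (D := D) i
            omega
        · rw [Aux10.hi_empty (Finset.not_nonempty_iff_eq_empty.mp hXi)]
          have := Aux10.hi_le (D := D) (i - 1)
          have := Aux10.hi_nonneg (D := D) i
          omega
      · by_cases hXi : (D.X i).Nonempty
        · by_cases hXi1 : (D.X (i + 1)).Nonempty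
          · exact Aux10.adj_odd C hXi hXi1 hoi
          · rw [Aux10.lo_empty (Finset.not_nonempty_iff_eq_empty.mp hXi1)]
            have := Aux10.lo_ge (D := D) i
            omega
        · rw [Aux10.lo_empty (Finset.not_nonempty_iff_eq_empty.mp hXi)]
          have := Aux10.lo_ge (D := D) (i + 1)
          omega
      · intro hd2
        constructor
        · exact Aux10.d2_cross C hd2 hoi
        · have ho2 : Odd (i - 2) := by
            rcases hoi with ⟨t, ht⟩
            exact ⟨t - 1, by omega⟩
          have := Aux10.d2_cross C hd2 ho2
          rw [show i - 2 + 2 = i by ring] at this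
          exact this
    · intro i h2i hip hei
      constructor
      · by_cases hXi : (D.X i).Nonempty
        · by_cases hXi1 : (D.X (i + 1)).Nonempty
          · exact Aux10.adj_even C hXi hXi1 hei
          · rw [Aux10.hi_empty (Finset.not_nonempty_iff_eq_empty.mp hXi1)]
            have := Aux10.hi_le (D := D) i
            omega
        · rw [Aux10.hi_empty (Finset.not_nonempty_iff_eq_empty.mp hXi)]
          have := Aux10.hi_le (D := D) (i + 1)
          have := Aux10.hi_nonneg (D := D) (i + 1)
          omega
      · by_cases hXi : (D.X i).Nonempty
        · by_cases hXi1 : (D.X (i - 1)).Nonempty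
          · have ho1 : Odd (i - 1) := by
              rcases hei with ⟨t, ht⟩
              exact ⟨t - 1, by omega⟩
            have := Aux10.adj_odd C hXi1
              (by rw [show i - 1 + 1 = i by ring]; exact hXi) ho1
            rw [show i - 1 + 1 = i by ring] at this
            exact this
          · rw [Aux10.lo_empty (Finset.not_nonempty_iff_eq_empty.mp hXi1)]
            have := Aux10.lo_ge (D := D) i
            omega
        · rw [Aux10.lo_empty (Finset.not_nonempty_iff_eq_empty.mp hXi)]
          have := Aux10.lo_ge (D := D) (i - 1)
          omega

/-- every well-configured `C`-datum is rigid. -/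
theorem stmt10 {S : NakSetup} (D : CDatum S) (h : D.WellConfigured) : D.Rigid := by
  exact stmt10' D h
end

section
/- Let (X_i, R, B) be a rigid C-datum. Then its summand count |R| + |B| + Σ_{i=2}^p m_i is at most n. (This is the combinatorial form of the paper's corollary: every basic τ_d-rigid pair (M, P) over Λ(n,l) satisfies |M| + |P| ≤ |Λ| = n.) -/
open scoped Classical

-- dev: basic lemmas, to be inserted before stmt12
namespace S12
open Finset

variable {S : NakSetup} (D : CDatum S)

noncomputable def Free : Finset ℤ := Finset.Icc 1 S.n \ (D.R ∪ D.B)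

noncomputable def Msum (t : ℤ) : ℤ := ∑ i ∈ Finset.Icc 2 t, D.m i

noncomputable def mPR (t : ℤ) : ℤ :=
  if Odd t then S.s (t-1) - (S.l - D.lo t) + 1 else S.s (t-1)

noncomputable def PRI (t : ℤ) : Finset ℤ :=
  Finset.Icc (S.s (t-1) - (S.l - D.lo t) + 1) (S.s (t-1) - D.hi (t-1))

noncomputable def PBI (t : ℤ) : Finset ℤ :=
  Finset.Icc (S.s t + (S.l - D.lo (t+1))) (S.s t + D.hi t - 1)

noncomputable def capB (t : ℤ) : ℤ := if Odd t then S.s t + D.hi t - 1 else S.s t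

lemma cardIcc (a b : ℤ) (h : a - 1 ≤ b) : ((Finset.Icc a b).card : ℤ) = b + 1 - a := by
  rw [Int.card_Icc]; rw [Int.toNat_of_nonneg (by omega)]

lemma act_bounds {i : ℤ} (h : (D.X i).Nonempty) : 2 ≤ i ∧ i ≤ S.p := by
  by_contra hc
  rw [D.hXout i hc] at h
  exact absurd h (by simp)

lemma lo_act {i : ℤ} (h : (D.X i).Nonempty) :
    1 ≤ D.lo i ∧ D.lo i ≤ D.hi i ∧ D.hi i ≤ S.l - 1 := by
  have hmin := (D.X i).min'_mem h
  have hmax := (D.X i).max'_mem h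
  have h1 := D.hX i hmin
  have h2 := D.hX i hmax
  simp only [Finset.mem_Icc] at h1 h2
  have hmm : (D.X i).min' h ≤ (D.X i).max' h := Finset.min'_le _ _ ((D.X i).max'_mem h)
  unfold CDatum.lo CDatum.hi
  rw [dif_pos h, dif_pos h]
  omega

lemma inact {i : ℤ} (h : ¬ (D.X i).Nonempty) :
    D.lo i = S.l ∧ D.hi i = 0 ∧ D.m i = 0 := by
  unfold CDatum.lo CDatum.hi CDatum.m
  rw [dif_neg h, dif_neg h]
  rw [Finset.not_nonempty_iff_eq_empty] at h
  simp [h]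

lemma lo_ge_one (i : ℤ) : 1 ≤ D.lo i := by
  by_cases h : (D.X i).Nonempty
  · exact (lo_act D h).1
  · have := (inact D h).1; have := S.hl; omega

lemma lo_le_l (i : ℤ) : D.lo i ≤ S.l := by
  by_cases h : (D.X i).Nonempty
  · have := (lo_act D h); have := S.hl; omega
  · exact le_of_eq (inact D h).1

lemma hi_nonneg (i : ℤ) : 0 ≤ D.hi i := by
  by_cases h : (D.X i).Nonempty
  · have := (lo_act D h); omega
  · exact le_of_eq (inact D h).2.1.symm

lemma hi_le (i : ℤ) : D.hi i ≤ S.l - 1 := by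
  by_cases h : (D.X i).Nonempty
  · exact (lo_act D h).2.2
  · have := (inact D h).2.1; have := S.hl; omega

lemma m_nonneg (i : ℤ) : 0 ≤ D.m i := by
  unfold CDatum.m; positivity

lemma X_subset_Icc {i : ℤ} (h : (D.X i).Nonempty) : D.X i ⊆ Finset.Icc (D.lo i) (D.hi i) := by
  intro x hx
  unfold CDatum.lo CDatum.hi
  rw [dif_pos h, dif_pos h]
  simp only [Finset.mem_Icc]
  exact ⟨Finset.min'_le _ _ hx, Finset.le_max' _ _ hx⟩

lemma m_le_act {i : ℤ} (h : (D.X i).Nonempty) : D.m i ≤ D.hi i - D.lo i + 1 := by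
  have h1 : D.m i ≤ ((Finset.Icc (D.lo i) (D.hi i)).card : ℤ) := by
    unfold CDatum.m
    exact_mod_cast Nat.cast_le.mpr (Finset.card_le_card (X_subset_Icc D h))
  have hlh := (lo_act D h)
  rw [cardIcc _ _ (by omega)] at h1
  omega

lemma m_le_hi (i : ℤ) : D.m i ≤ D.hi i := by
  by_cases h : (D.X i).Nonempty
  · have := m_le_act D h; have := (lo_act D h).1; omega
  · have := (inact D h); omega

lemma m_le_lminuslo (i : ℤ) : D.m i ≤ S.l - D.lo i := by
  by_cases h : (D.X i).Nonempty
  · have := m_le_act D h; have := (lo_act D h).2.2; omega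
  · have := (inact D h); omega

lemma m_le_l1 (i : ℤ) : D.m i ≤ S.l - 1 := by
  have := m_le_lminuslo D i; have := lo_ge_one D i; omega

lemma m_zero_out {i : ℤ} (h : ¬ (2 ≤ i ∧ i ≤ S.p)) : D.m i = 0 := by
  unfold CDatum.m; rw [D.hXout i h]; simp

end S12

namespace S12
open Finset
variable {S : NakSetup} (D : CDatum S)

lemma s_one : S.s 1 = 1 := by
  have h := S.hs_odd 1 le_rfl S.hp ⟨0, by ring⟩
  linarith

lemma gapOdd {j : ℤ} (hj : Odd j) (h1 : 1 ≤ j) (h2 : j + 1 ≤ S.p) :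
    2 * (S.s (j+1) - S.s j) = S.d * S.l := by
  have ho := S.hs_odd j h1 (by omega) hj
  have he := S.hs_even (j+1) (by omega) h2 (by rcases hj with ⟨k, hk⟩; exact ⟨k+1, by omega⟩)
  have : 2 * S.s (j+1) - 2 * S.s j = S.d * S.l := by rw [ho, he]; ring
  linarith

lemma gapEven {j : ℤ} (hj : Even j) (h1 : 1 ≤ j) (h2 : j + 1 ≤ S.p) :
    2 * (S.s (j+1) - S.s j) = (S.d - 2) * S.l + 4 := by
  have he := S.hs_even j h1 (by omega) hj
  have ho := S.hs_odd (j+1) (by omega) h2 (Even.add_one hj)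
  have : 2 * S.s (j+1) - 2 * S.s j = (S.d - 2) * S.l + 4 := by rw [ho, he]; ring
  linarith

lemma s_step {j : ℤ} (h1 : 1 ≤ j) (h2 : j + 1 ≤ S.p) : S.s j + 2 ≤ S.s (j+1) := by
  have hd := S.hd; have hl := S.hl
  rcases Int.even_or_odd j with hj | hj
  · have := gapEven (S := S) hj h1 h2
    nlinarith
  · have := gapOdd (S := S) hj h1 h2
    nlinarith

lemma s_mono {a b : ℤ} (h1 : 1 ≤ a) (hab : a ≤ b) (hb : b ≤ S.p) : S.s a ≤ S.s b := by
  have key := Int.le_induction (m := a) (motive := fun c _ => c ≤ S.p → S.s a ≤ S.s c)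
    (fun _ => le_refl _)
    (fun k hk ih hkp => by
      have h1' := ih (by omega)
      have := s_step (S := S) (j := k) (by omega) hkp
      omega)
  exact key b hab hb

lemma s_ge_one {j : ℤ} (h1 : 1 ≤ j) (h2 : j ≤ S.p) : 1 ≤ S.s j := by
  have := s_mono (S := S) le_rfl h1 h2
  rw [s_one] at this; omega

lemma odd_p_l2 (hp : Odd S.p) : S.l = 2 := by
  rcases S.hcase with h | ⟨_, _, hpe⟩
  · exact h
  · exact absurd hpe (Int.not_even_iff_odd.mpr hp)

lemma s_p : S.s S.p = S.n := by
  rcases Int.even_or_odd S.p with hp | hp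
  · have := S.hs_even S.p S.hp le_rfl hp
    have := S.hn; linarith
  · have hl2 := odd_p_l2 (S := S) hp
    have := S.hs_odd S.p S.hp le_rfl hp
    have := S.hn
    nlinarith [hl2]

lemma s_lb2 {j : ℤ} (h1 : 2 ≤ j) (h2 : j ≤ S.p) : S.l + 1 ≤ S.s j := by
  have hs2 : 2 * S.s 2 = S.d * S.l + 2 := by
    have := S.hs_even 2 (by omega) (by omega) ⟨1, by ring⟩
    linarith
  have hm := s_mono (S := S) (a := 2) (b := j) (by omega) h1 h2
  have hd := S.hd; have hl := S.hl
  nlinarith [hm, mul_le_mul_of_nonneg_right hd (by omega : (0:ℤ) ≤ S.l)]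

lemma n_nonneg : 0 ≤ S.n := by
  have := s_p (S := S)
  have := s_ge_one (S := S) S.hp le_rfl
  omega

lemma dl_cases : S.d = 2 ∨ S.l = 2 ∨ 4 ≤ S.d := by
  rcases S.hcase with h | ⟨_, ⟨r, hr⟩, _⟩
  · exact Or.inr (Or.inl h)
  · have := S.hd; omega

lemma Msum_rec {t : ℤ} (h : 1 ≤ t) : Msum D (t+1) = Msum D t + D.m (t+1) := by
  unfold Msum
  have : Finset.Icc 2 (t+1) = insert (t+1) (Finset.Icc 2 t) := by
    ext x; simp only [Finset.mem_Icc, Finset.mem_insert]; omega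
  rw [this, Finset.sum_insert (by simp)]
  ring

lemma Msum_one : Msum D 1 = 0 := by
  unfold Msum
  rw [Finset.Icc_eq_empty (by omega)]; simp

end S12

namespace S12
open Finset
variable {S : NakSetup} (D : CDatum S)

lemma RI_odd {t : ℤ} (h : Odd t) :
    D.RI t = Finset.Icc (S.s (t-1) - (S.l - D.lo t) + 1) (S.s (t-1)) := by
  unfold CDatum.RI; rw [if_pos h]

lemma RI_even {t : ℤ} (h : Even t) :
    D.RI t = Finset.Icc (S.s (t-1)) (S.s (t-1) + (S.l - D.lo t) - 1) := by
  unfold CDatum.RI; rw [if_neg (by exact Int.not_odd_iff_even.mpr h)]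

lemma BI_odd {t : ℤ} (h : Odd t) :
    D.BI t = Finset.Icc (S.s t) (S.s t + D.hi t - 1) := by
  unfold CDatum.BI; rw [if_pos h]

lemma BI_even {t : ℤ} (h : Even t) :
    D.BI t = Finset.Icc (S.s t - D.hi t + 1) (S.s t) := by
  unfold CDatum.BI; rw [if_neg (by exact Int.not_odd_iff_even.mpr h)]

lemma mPR_odd {t : ℤ} (h : Odd t) : mPR D t = S.s (t-1) - (S.l - D.lo t) + 1 := by
  unfold mPR; rw [if_pos h]

lemma mPR_even {t : ℤ} (h : Even t) : mPR D t = S.s (t-1) := by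
  unfold mPR; rw [if_neg (by exact Int.not_odd_iff_even.mpr h)]

lemma capB_odd {t : ℤ} (h : Odd t) : capB D t = S.s t + D.hi t - 1 := by
  unfold capB; rw [if_pos h]

lemma capB_even {t : ℤ} (h : Even t) : capB D t = S.s t := by
  unfold capB; rw [if_neg (by exact Int.not_odd_iff_even.mpr h)]

lemma inter_empty_sub {A X Y : Finset ℤ} (hXY : X ⊆ Y) (h : A ∩ Y = ∅) : A ∩ X = ∅ := by
  rw [Finset.eq_empty_iff_forall_notMem] at h ⊢
  intro a ha
  rw [Finset.mem_inter] at ha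
  exact h a (Finset.mem_inter.mpr ⟨ha.1, hXY ha.2⟩)

lemma not_mem_of_inter_empty {A X : Finset ℤ} (h : A ∩ X = ∅) {a : ℤ} (ha : a ∈ X) :
    a ∉ A := by
  intro haA
  rw [Finset.eq_empty_iff_forall_notMem] at h
  exact h a (Finset.mem_inter.mpr ⟨haA, ha⟩)

section Rigid
lemma b3R (hrig : D.Rigid) {i : ℤ} (h2 : 2 ≤ i) (hp : i ≤ S.p) : D.R ∩ D.RI i = ∅ :=
  (hrig.2.2.2 i h2 hp).1

lemma b3B (hrig : D.Rigid) {i : ℤ} (h2 : 2 ≤ i) (hp : i ≤ S.p) : D.B ∩ D.BI i = ∅ :=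
  (hrig.2.2.2 i h2 hp).2

lemma b1hi (hrig : D.Rigid) {i : ℤ} (h2 : 2 ≤ i) (hp : i ≤ S.p) (ho : Odd i) :
    D.hi (i-1) + D.hi i ≤ S.l - 1 := (hrig.2.1 i h2 hp ho).1

lemma b1lo (hrig : D.Rigid) {i : ℤ} (h2 : 2 ≤ i) (hp : i ≤ S.p) (ho : Odd i) :
    S.l + 1 ≤ D.lo i + D.lo (i+1) := (hrig.2.1 i h2 hp ho).2.1

lemma b1d2 (hrig : D.Rigid) {i : ℤ} (h2 : 2 ≤ i) (hp : i ≤ S.p) (ho : Odd i) (hd : S.d = 2) :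
    D.hi i ≤ D.lo (i+2) + 1 ∧ D.hi (i-2) ≤ D.lo i + 1 := (hrig.2.1 i h2 hp ho).2.2 hd

lemma b2hi (hrig : D.Rigid) {i : ℤ} (h2 : 2 ≤ i) (hp : i ≤ S.p) (he : Even i) :
    D.hi i + D.hi (i+1) ≤ S.l - 1 := (hrig.2.2.1 i h2 hp he).1

lemma pair_odd (hrig : D.Rigid) {τ : ℤ} (ho : Odd τ) (h2 : 2 ≤ τ) (hp : τ ≤ S.p) :
    D.m τ + D.m (τ+1) ≤ S.l - 1 := by
  by_cases h1 : (D.X (τ+1)).Nonempty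
  · by_cases h0 : (D.X τ).Nonempty
    · have hb := b1lo D hrig h2 hp ho
      have m1 := m_le_act D h0
      have m2 := m_le_act D h1
      have := (lo_act D h1).2.2
      have := (lo_act D h0).2.2
      omega
    · have := (inact D h0).2.2
      have := m_le_l1 D (τ+1)
      omega
  · have := (inact D h1).2.2
    have := m_le_l1 D τ
    omega

lemma pair_even (hrig : D.Rigid) {t : ℤ} (he : Even t) (h2 : 2 ≤ t) (hp : t ≤ S.p)
    (h0 : (D.X t).Nonempty) (h1 : (D.X (t+1)).Nonempty) :
    D.m t + D.m (t+1) ≤ S.l + 1 - D.lo t - D.lo (t+1) := by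
  have hb := b2hi D hrig h2 hp he
  have m1 := m_le_act D h0
  have m2 := m_le_act D h1
  omega

lemma triple (hrig : D.Rigid) {t : ℤ} (he : Even t) (h2 : 2 ≤ t) (hp : t ≤ S.p)
    (h0 : (D.X t).Nonempty) (h1 : (D.X (t+1)).Nonempty) :
    D.m t + D.m (t+1) + D.m (t+2) ≤ S.l - 1 := by
  have hpe := pair_even D hrig he h2 hp h0 h1
  have l0 := lo_ge_one D t
  have l1 := lo_ge_one D (t+1)
  by_cases h3 : (D.X (t+2)).Nonempty
  · have hb1 := act_bounds D h1
    have hb := b1lo D hrig (i := t+1) (by omega) hb1.2 (Even.add_one he)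
    rw [show t + 1 + 1 = t + 2 from by ring] at hb
    have m3 := m_le_act D h3
    have := hi_le D (t+2)
    have := pair_even D hrig he h2 hp h0 h1
    omega
  · have := (inact D h3).2.2
    omega

lemma sizePRI (hrig : D.Rigid) {τ : ℤ} (ho : Odd τ) (h2 : 2 ≤ τ) (hp : τ ≤ S.p) (h : (D.X τ).Nonempty) :
    D.m τ ≤ (S.l - D.lo τ) - D.hi (τ-1) := by
  have hb := b1hi D hrig h2 hp ho
  have := m_le_act D h
  have := (lo_act D h).2.2
  omega

lemma sizePBI (hrig : D.Rigid) {τ : ℤ} (ho : Odd τ) (h2 : 2 ≤ τ) (hp : τ ≤ S.p) (h : (D.X τ).Nonempty) :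
    D.m τ ≤ D.hi τ - (S.l - D.lo (τ+1)) := by
  by_cases h1 : (D.X (τ+1)).Nonempty
  · have hb := b1lo D hrig h2 hp ho
    have := m_le_act D h
    omega
  · have := (inact D h1).1
    have := m_le_act D h
    have := (lo_act D h).1
    omega

lemma L13odd (hrig : D.Rigid) {j : ℤ} (ho : Odd j) (h1 : 1 ≤ j) (h2 : j + 1 ≤ S.p) :
    D.hi j + (S.l - D.lo (j+2)) ≤ (S.s (j+1) - S.s j) + 1 := by
  have hgap := gapOdd (S := S) ho h1 h2
  have hl := S.hl; have hd := S.hd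
  have hhi := hi_le D j
  have hhi0 := hi_nonneg D j
  have hlo1 := lo_ge_one D (j+2)
  have hlol := lo_le_l D (j+2)
  rcases dl_cases (S := S) with hc | hc | hc
  · -- d = 2
    by_cases hj1 : 2 ≤ j
    · have := (b1d2 D hrig hj1 (by omega) ho hc).1
      nlinarith
    · -- j = 1
      have hj : j = 1 := by omega
      have : D.hi j = 0 := by
        have := D.hXout j (by omega)
        unfold CDatum.hi
        rw [dif_neg (by rw [this]; simp)]
      nlinarith
  · -- l = 2
    nlinarith
  · -- d ≥ 4
    nlinarith [mul_le_mul_of_nonneg_right hc (by omega : (0:ℤ) ≤ S.l)]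

lemma nest1 (hrig : D.Rigid) {t : ℤ} (ho : Odd t) (h0 : (D.X t).Nonempty) (h1 : (D.X (t+1)).Nonempty) :
    D.B ∩ D.RI (t+1) = ∅ := by
  have hb0 := act_bounds D h0
  have hb := b1lo D hrig hb0.1 hb0.2 ho
  have hact := (lo_act D h0)
  apply inter_empty_sub (Y := D.BI t) _ (b3B D hrig hb0.1 hb0.2)
  have he1 : Even (t+1) := by rcases ho with ⟨k, hk⟩; exact ⟨k+1, by omega⟩
  rw [RI_even D he1, BI_odd D ho]
  simp only [add_sub_cancel_right]
  apply Finset.Icc_subset_Icc le_rfl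
  omega

lemma nest2 (hrig : D.Rigid) {τ : ℤ} (he : Even τ) (h1 : (D.X (τ+1)).Nonempty) :
    D.R ∩ D.BI τ = ∅ := by
  have hb1 := act_bounds D h1
  have ho1 : Odd (τ+1) := Even.add_one he
  have hb := b1hi D hrig hb1.1 hb1.2 ho1
  rw [show τ + 1 - 1 = τ from by ring] at hb
  have hact := lo_act D h1
  apply inter_empty_sub (Y := D.RI (τ+1)) _ (b3R D hrig hb1.1 hb1.2)
  rw [RI_odd D ho1, BI_even D he]
  simp only [add_sub_cancel_right]
  apply Finset.Icc_subset_Icc _ le_rfl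
  omega

end Rigid
end S12

namespace S12
open Finset
variable {S : NakSetup} (D : CDatum S)

lemma mem_free {g : ℤ} : g ∈ Free D ↔ (1 ≤ g ∧ g ≤ S.n) ∧ g ∉ D.R ∧ g ∉ D.B := by
  unfold Free
  simp only [Finset.mem_sdiff, Finset.mem_Icc, Finset.mem_union]
  tauto

lemma sub_free {G : Finset ℤ} (h1 : ∀ g ∈ G, 1 ≤ g ∧ g ≤ S.n)
    (h2 : ∀ g ∈ G, g ∉ D.R) (h3 : ∀ g ∈ G, g ∉ D.B) : G ⊆ Free D := by
  intro g hg
  exact (mem_free D).mpr ⟨h1 g hg, h2 g hg, h3 g hg⟩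

lemma free_card : ((Free D).card : ℤ) = S.n - D.R.card - D.B.card := by
  unfold Free
  have hsub : D.R ∪ D.B ⊆ Finset.Icc 1 S.n := Finset.union_subset D.hR D.hB
  rw [Finset.card_sdiff_of_subset hsub]
  have hle := Finset.card_le_card hsub
  have hcu : (D.R ∪ D.B).card = D.R.card + D.B.card := Finset.card_union_of_disjoint D.hRB
  have hIcc : ((Finset.Icc (1:ℤ) S.n).card : ℤ) = S.n := by
    rw [cardIcc _ _ (by have := n_nonneg (S := S); omega)]; ring
  push_cast [hcu] at hle ⊢
  omega

lemma window (hrig : D.Rigid) {x y : ℤ} (hx : x ∈ D.B) (hy : y ∈ D.R) (hxy : x < y) :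
    ∃ z, x < z ∧ z + S.l - 2 < y ∧ Finset.Icc z (z + S.l - 2) ⊆ Free D ∧
      ((Finset.Icc z (z + S.l - 2)).card : ℤ) = S.l - 1 := by
  obtain ⟨z, hz1, hz2, hz3⟩ := hrig.1 x hx y hy hxy
  have hxn := D.hB hx
  have hyn := D.hR hy
  simp only [Finset.mem_Icc] at hxn hyn
  have hl := S.hl
  have hnm : ∀ g ∈ Finset.Icc z (z + S.l - 2), g ∉ D.R ∪ D.B := by
    intro g hg hmem
    exact Finset.eq_empty_iff_forall_notMem.mp hz3 g (Finset.mem_inter.mpr ⟨hg, hmem⟩)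
  refine ⟨z, hz1, hz2, ?_, ?_⟩
  · apply sub_free
    · intro g hg; simp only [Finset.mem_Icc] at hg; omega
    · intro g hg hgR
      exact hnm g hg (Finset.mem_union_left _ hgR)
    · intro g hg hgB
      exact hnm g hg (Finset.mem_union_right _ hgB)
  · rw [cardIcc _ _ (by omega)]; ring

lemma mPR_mono {j : ℤ} (h2 : 2 ≤ j) (hp : j ≤ S.p) : mPR D j ≤ mPR D (j+1) := by
  have hl := S.hl
  rcases Int.even_or_odd j with he | ho
  · rw [mPR_even D he, mPR_odd D (Even.add_one he)]
    simp only [add_sub_cancel_right]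
    have hgap := gapOdd (S := S) (j := j - 1) (by rcases he with ⟨k,hk⟩; exact ⟨k-1, by omega⟩)
      (by omega) (by omega)
    rw [show j - 1 + 1 = j from by ring] at hgap
    have hlo := lo_ge_one D (j+1)
    have hd := S.hd
    nlinarith
  · have he1 : Even (j+1) := by rcases ho with ⟨k,hk⟩; exact ⟨k+1, by omega⟩
    rw [mPR_odd D ho, mPR_even D he1]
    simp only [add_sub_cancel_right]
    have := s_step (S := S) (j := j - 1) (by omega) (by omega)
    rw [show j - 1 + 1 = j from by ring] at this
    have := lo_le_l D j
    omega

lemma capB_mono {t : ℤ} (h1 : 1 ≤ t) (h2 : t + 1 ≤ S.p) : capB D t ≤ capB D (t+1) := by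
  have hstep := s_step (S := S) h1 h2
  rcases Int.even_or_odd t with he | ho
  · rw [capB_even D he, capB_odd D (Even.add_one he)]
    have := hi_nonneg D (t+1)
    omega
  · have he1 : Even (t+1) := by rcases ho with ⟨k,hk⟩; exact ⟨k+1, by omega⟩
    rw [capB_odd D ho, capB_even D he1]
    have hgap := gapOdd (S := S) ho h1 h2
    have := hi_le D t
    have hl := S.hl; have hd := S.hd
    nlinarith

lemma capB_lt (hrig : D.Rigid) {t : ℤ} (h1 : 1 ≤ t) (h2 : t + 1 ≤ S.p) :
    capB D t < mPR D (t+2) := by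
  rcases Int.even_or_odd t with he | ho
  · rw [capB_even D he, mPR_even D (by rcases he with ⟨k,hk⟩; exact ⟨k+1, by omega⟩)]
    rw [show t + 2 - 1 = t + 1 from by ring]
    have := s_step (S := S) h1 h2
    omega
  · rw [capB_odd D ho, mPR_odd D (by rcases ho with ⟨k,hk⟩; exact ⟨k+1, by omega⟩)]
    rw [show t + 2 - 1 = t + 1 from by ring]
    have := L13odd D hrig ho h1 h2
    omega

def GOOD (t : ℤ) : Prop := ∃ A : Finset ℤ, A ⊆ Free D ∧ (∀ a ∈ A, a ≤ capB D t) ∧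
  ((Odd t ∧ Msum D (t+1) ≤ (A.card : ℤ))
  ∨ (Msum D t ≤ (A.card : ℤ) ∧ ∀ a ∈ A, a < mPR D (t+1))
  ∨ (Even t ∧ 2 ≤ t ∧ t ≤ S.p ∧ (D.X t).Nonempty ∧ D.B ∩ D.RI t = ∅ ∧ D.RI t ⊆ A ∧
      Msum D (t-1) ≤ ((A \ D.RI t).card : ℤ) ∧
      ∀ a ∈ A, a < mPR D t ∨ a ∈ PBI D (t-1) ∨ a ∈ D.RI t)
  ∨ (Even t ∧ 2 ≤ t ∧ t ≤ S.p ∧ (D.X t).Nonempty ∧ D.R ∩ D.BI t = ∅ ∧ D.BI t ⊆ A ∧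
      Msum D (t-1) ≤ ((A \ D.BI t).card : ℤ) ∧
      ∀ a ∈ A, a < mPR D (t+1) ∨ a ∈ D.BI t)
  ∨ (Odd t ∧ 2 ≤ t ∧ t ≤ S.p ∧ (D.X t).Nonempty ∧ Msum D t ≤ (A.card : ℤ) ∧
      ∀ a ∈ A, a < mPR D (t+1) ∨ a ∈ PBI D t))

end S12

namespace S12
open Finset
variable {S : NakSetup} (D : CDatum S)

lemma m_pos {i : ℤ} (h : (D.X i).Nonempty) : 1 ≤ D.m i := by
  unfold CDatum.m
  exact_mod_cast Nat.one_le_cast.mpr (Finset.card_pos.mpr h)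

lemma PRI_eq (t : ℤ) :
    PRI D (t+1) = Finset.Icc (S.s t - (S.l - D.lo (t+1)) + 1) (S.s t - D.hi t) := by
  unfold PRI; rw [show t + 1 - 1 = t from by ring]

lemma PBI_eq (t : ℤ) :
    PBI D t = Finset.Icc (S.s t + (S.l - D.lo (t+1))) (S.s t + D.hi t - 1) := rfl

lemma card_RI_even {t : ℤ} (he : Even t) : ((D.RI t).card : ℤ) = S.l - D.lo t := by
  rw [RI_even D he, cardIcc _ _ (by have := lo_le_l D t; omega)]
  ring

lemma card_BI_even {t : ℤ} (he : Even t) : ((D.BI t).card : ℤ) = D.hi t := by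
  rw [BI_even D he, cardIcc _ _ (by have := hi_nonneg D t; omega)]
  ring

lemma RIe_free (hrig : D.Rigid) {t : ℤ} (he : Even t) (h2 : 2 ≤ t) (hp : t ≤ S.p)
    (hB : D.B ∩ D.RI t = ∅) : D.RI t ⊆ Free D := by
  have hb3 := b3R D hrig h2 hp
  apply sub_free
  · intro g hg
    rw [RI_even D he, Finset.mem_Icc] at hg
    have h1 := s_ge_one (S := S) (j := t - 1) (by omega) (by omega)
    have hgap := gapOdd (S := S) (j := t-1) (by rcases he with ⟨k,hk⟩; exact ⟨k-1, by omega⟩)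
      (by omega) (by omega)
    rw [show t - 1 + 1 = t from by ring] at hgap
    have hsn : S.s t ≤ S.n := by
      have := s_mono (S := S) (a := t) (b := S.p) (by omega) hp le_rfl
      have := s_p (S := S); omega
    have := lo_ge_one D t
    have hl := S.hl; have hd := S.hd
    constructor
    · omega
    · nlinarith
  · intro g hg; exact not_mem_of_inter_empty hb3 hg
  · intro g hg; exact not_mem_of_inter_empty hB hg

lemma BIe_free (hrig : D.Rigid) {t : ℤ} (he : Even t) (h2 : 2 ≤ t) (hp : t ≤ S.p)
    (hR : D.R ∩ D.BI t = ∅) : D.BI t ⊆ Free D := by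
  have hb3 := b3B D hrig h2 hp
  apply sub_free
  · intro g hg
    rw [BI_even D he, Finset.mem_Icc] at hg
    have h1 := s_lb2 (S := S) h2 hp
    have hsn : S.s t ≤ S.n := by
      have := s_mono (S := S) (a := t) (b := S.p) (by omega) hp le_rfl
      have := s_p (S := S); omega
    have := hi_le D t
    have hl := S.hl
    omega
  · intro g hg; exact not_mem_of_inter_empty hR hg
  · intro g hg; exact not_mem_of_inter_empty hb3 hg

lemma PRI_sub_RI {t : ℤ} (ho : Odd (t+1)) : PRI D (t+1) ⊆ D.RI (t+1) := by
  rw [PRI_eq, RI_odd D ho, show t + 1 - 1 = t from by ring]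
  apply Finset.Icc_subset_Icc le_rfl
  have := hi_nonneg D t
  omega

lemma PRIo_free (hrig : D.Rigid) {t : ℤ} (ho : Odd (t+1)) (h2 : 2 ≤ t) (hp : t+1 ≤ S.p)
    (hB : D.B ∩ PRI D (t+1) = ∅) : PRI D (t+1) ⊆ Free D := by
  have hb3 := b3R D hrig (i := t+1) (by omega) hp
  apply sub_free
  · intro g hg
    rw [PRI_eq, Finset.mem_Icc] at hg
    have h1 := s_lb2 (S := S) (j := t) (by omega) (by omega)
    have hsn : S.s t ≤ S.n := by
      have := s_mono (S := S) (a := t) (b := S.p) (by omega) (by omega) le_rfl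
      have := s_p (S := S); omega
    have := lo_ge_one D (t+1)
    have := hi_nonneg D t
    omega
  · intro g hg
    exact not_mem_of_inter_empty hb3 (PRI_sub_RI D ho hg)
  · intro g hg; exact not_mem_of_inter_empty hB hg

lemma PBI_sub_BI {t : ℤ} (ho : Odd t) : PBI D t ⊆ D.BI t := by
  rw [PBI_eq, BI_odd D ho]
  apply Finset.Icc_subset_Icc _ le_rfl
  have := lo_le_l D (t+1)
  omega

lemma sT_hi_le_n (hrig : D.Rigid) {t : ℤ} (ho : Odd t) (h2 : 2 ≤ t) (hp : t ≤ S.p) :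
    S.s t + D.hi t - 1 ≤ S.n := by
  rcases eq_or_lt_of_le hp with heq | hlt
  · subst heq
    have hl2 := odd_p_l2 (S := S) ho
    have := hi_le D S.p
    have := s_p (S := S)
    omega
  · have hgap := gapOdd (S := S) ho (by omega) (by omega)
    have hsn : S.s (t+1) ≤ S.n := by
      have := s_mono (S := S) (a := t+1) (b := S.p) (by omega) (by omega) le_rfl
      have := s_p (S := S); omega
    have := hi_le D t
    have hl := S.hl; have hd := S.hd
    nlinarith

lemma PBIo_free (hrig : D.Rigid) {t : ℤ} (ho : Odd t) (h2 : 2 ≤ t) (hp : t ≤ S.p)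
    (hR : D.R ∩ PBI D t = ∅) : PBI D t ⊆ Free D := by
  have hb3 := b3B D hrig h2 hp
  apply sub_free
  · intro g hg
    rw [PBI_eq, Finset.mem_Icc] at hg
    have h1 := s_ge_one (S := S) (j := t) (by omega) hp
    have hub := sT_hi_le_n D hrig ho h2 hp
    have := lo_le_l D (t+1)
    omega
  · intro g hg; exact not_mem_of_inter_empty hR hg
  · intro g hg
    exact not_mem_of_inter_empty hb3 (PBI_sub_BI D ho hg)

lemma P1union (hrig : D.Rigid) {t : ℤ} (he : Even t) (h2 : 2 ≤ t) (hp1 : t + 1 ≤ S.p)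
    (h0 : (D.X t).Nonempty) (h1 : (D.X (t+1)).Nonempty) :
    D.m t + D.m (t+1) ≤ ((D.RI t ∪ PRI D (t+1)).card : ℤ) := by
  have ho1 : Odd (t+1) := Even.add_one he
  have hRI := RI_even D he
  have hPRI := PRI_eq D t
  have hgap := gapOdd (S := S) (j := t-1) (by rcases he with ⟨k,hk⟩; exact ⟨k-1, by omega⟩)
    (by omega) (by omega)
  rw [show t - 1 + 1 = t from by ring] at hgap
  have hm1 : D.m (t+1) ≤ (S.l - D.lo (t+1)) - D.hi t := by
    have := sizePRI D hrig ho1 (by omega) hp1 h1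
    rw [show t + 1 - 1 = t from by ring] at this
    exact this
  have hm0 := m_le_act D h0
  have hm0' := m_le_lminuslo D t
  have hla := lo_act D h0
  have hla1 := lo_act D h1
  have hl := S.hl; have hd := S.hd
  have hm1pos := m_pos D h1
  rcases le_or_gt (S.s t - D.hi t) (S.s (t-1) + (S.l - D.lo t) - 1) with hb | hb
  · -- PRI top below RI top : union ⊇ RI t
    have hcard : (S.l - D.lo t) ≤ ((D.RI t ∪ PRI D (t+1)).card : ℤ) := by
      have hsub : D.RI t ⊆ D.RI t ∪ PRI D (t+1) := Finset.subset_union_left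
      have := Finset.card_le_card hsub
      have hc := card_RI_even D he
      exact_mod_cast hc ▸ Nat.cast_le.mpr this
    have hpe := pair_even D hrig he h2 (by omega) h0 h1
    omega
  · rcases le_or_gt (S.s t - (S.l - D.lo (t+1)) + 1) (S.s (t-1) + (S.l - D.lo t) - 1 + 1)
      with hov | hov
    · -- overlapping: union contains Icc (s (t-1)) (s t - hi t)
      have hsub : Finset.Icc (S.s (t-1)) (S.s t - D.hi t) ⊆ D.RI t ∪ PRI D (t+1) := by
        intro x hx
        rw [Finset.mem_Icc] at hx
        rw [Finset.mem_union, hRI, hPRI, Finset.mem_Icc, Finset.mem_Icc]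
        omega
      have hcard : (S.s t - D.hi t) + 1 - S.s (t-1) ≤ ((D.RI t ∪ PRI D (t+1)).card : ℤ) := by
        have := Finset.card_le_card hsub
        have hc := cardIcc (S.s (t-1)) (S.s t - D.hi t) (by omega)
        exact_mod_cast hc ▸ Nat.cast_le.mpr this
      -- need m t + m (t+1) ≤ s t - hi t - s (t-1) + 1
      rcases dl_cases (S := S) with hc | hc | hc
      · -- d = 2 ⇒ w = l and hi t ≤ lo t
        have hw : S.s t - S.s (t-1) = S.l := by rw [hc] at hgap; omega
        omega
      · -- l = 2
        have := hi_le D t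
        omega
      · -- d ≥ 4 : w ≥ 2l
        have hw : 2 * S.l ≤ S.s t - S.s (t-1) := by
          nlinarith [mul_le_mul_of_nonneg_right hc (by omega : (0:ℤ) ≤ S.l)]
        have := hi_le D t
        omega
    · -- disjoint
      have hdisj : Disjoint (D.RI t) (PRI D (t+1)) := by
        rw [Finset.disjoint_left]
        intro x hx hx'
        rw [hRI, Finset.mem_Icc] at hx
        rw [hPRI, Finset.mem_Icc] at hx'
        omega
      have hcard : ((D.RI t ∪ PRI D (t+1)).card : ℤ) =
          (S.l - D.lo t) + ((S.l - D.lo (t+1)) - D.hi t) := by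
        rw [Finset.card_union_of_disjoint hdisj]
        push_cast
        rw [card_RI_even D he]
        rw [hPRI, cardIcc _ _ (by omega)]
        ring
      omega

end S12

namespace S12
open Finset
variable {S : NakSetup} (D : CDatum S)

lemma union_card_ge {A G : Finset ℤ} {c g : ℤ} (hdisj : Disjoint A G) (hA : c ≤ (A.card : ℤ))
    (hG : g ≤ (G.card : ℤ)) : c + g ≤ ((A ∪ G).card : ℤ) := by
  rw [Finset.card_union_of_disjoint hdisj]
  push_cast
  omega

lemma sub_card_le {A B : Finset ℤ} (h : A ⊆ B) : (A.card : ℤ) ≤ (B.card : ℤ) := by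
  exact_mod_cast Nat.cast_le.mpr (Finset.card_le_card h)

lemma stepOdd (hrig : D.Rigid) {t : ℤ} (hto : Odd t) (h1 : 1 ≤ t) (hp : t + 1 ≤ S.p)
    (hG : GOOD D t) : GOOD D (t+1) := by
  obtain ⟨A, hAf, hAcap, hstate⟩ := hG
  have he1 : Even (t+1) := by rcases hto with ⟨k, hk⟩; exact ⟨k+1, by omega⟩
  have hcapm := capB_mono D h1 hp
  have hclt : capB D t < mPR D (t+1+1) := by
    rw [show t+1+1 = t+2 from by ring]; exact capB_lt D hrig h1 hp
  have hMrec : Msum D (t+1) = Msum D t + D.m (t+1) := Msum_rec D h1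
  have hm1nn := m_nonneg D (t+1)
  have hcapt : capB D t = S.s t + D.hi t - 1 := capB_odd D hto
  have hcapt1 : capB D (t+1) = S.s (t+1) := capB_even D he1
  have hmPR1 : mPR D (t+1) = S.s t := by
    rw [mPR_even D he1, show t+1-1 = t from by ring]
  have hgap := gapOdd (S := S) hto h1 hp
  have hl := S.hl; have hd := S.hd
  have hwl : S.l ≤ S.s (t+1) - S.s t := by nlinarith
  have hhit := hi_le D t
  have hhit0 := hi_nonneg D t
  have hlo1 := lo_ge_one D (t+1)
  have hlol1 := lo_le_l D (t+1)
  rcases hstate with hP | hS | hZR | hZB | hPB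
  · -- P state
    exact ⟨A, hAf, fun a ha => le_trans (hAcap a ha) hcapm,
      Or.inr (Or.inl ⟨hP.2, fun a ha => lt_of_le_of_lt (hAcap a ha) hclt⟩)⟩
  · -- S state
    obtain ⟨hSM, hShole⟩ := hS
    by_cases hact : (D.X (t+1)).Nonempty
    · have hb := act_bounds D hact
      have hmono : mPR D (t+1) ≤ mPR D (t+1+1) := mPR_mono D hb.1 hb.2
      by_cases hmR : D.B ∩ D.RI (t+1) = ∅
      · -- mode R, emit ZR state
        have hRIeq : D.RI (t+1) = Finset.Icc (S.s t) (S.s t + (S.l - D.lo (t+1)) - 1) := by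
          rw [RI_even D he1, show t+1-1 = t from by ring]
        have hfree := RIe_free D hrig he1 hb.1 hb.2 hmR
        have hdisj : Disjoint A (D.RI (t+1)) := by
          rw [Finset.disjoint_left]
          intro a ha ha'
          have h1' := hShole a ha
          rw [hmPR1] at h1'
          rw [hRIeq, Finset.mem_Icc] at ha'
          omega
        have hRIcard : ((D.RI (t+1)).card : ℤ) = S.l - D.lo (t+1) := card_RI_even D he1
        have hmle := m_le_lminuslo D (t+1)
        refine ⟨A ∪ D.RI (t+1), Finset.union_subset hAf hfree, ?_, ?_⟩
        · intro a ha
          rcases Finset.mem_union.mp ha with ha | ha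
          · exact le_trans (hAcap a ha) hcapm
          · rw [hRIeq, Finset.mem_Icc] at ha
            omega
        · refine Or.inr (Or.inr (Or.inl ⟨he1, by omega, hb.2, hact, hmR,
            Finset.subset_union_right, ?_, ?_⟩))
          · have hAsub : A ⊆ (A ∪ D.RI (t+1)) \ D.RI (t+1) := by
              intro a ha
              rw [Finset.mem_sdiff]
              exact ⟨Finset.mem_union_left _ ha, Finset.disjoint_left.mp hdisj ha⟩
            rw [show t+1-1 = t from by ring]
            exact le_trans hSM (sub_card_le hAsub)
          · intro a ha
            rcases Finset.mem_union.mp ha with ha | ha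
            · exact Or.inl (hShole a ha)
            · exact Or.inr (Or.inr ha)
      · by_cases hmB : D.R ∩ D.BI (t+1) = ∅
        · -- mode B, emit ZB state
          have hBIeq : D.BI (t+1) = Finset.Icc (S.s (t+1) - D.hi (t+1) + 1) (S.s (t+1)) :=
            BI_even D he1
          have hfree := BIe_free D hrig he1 hb.1 hb.2 hmB
          have hhile := hi_le D (t+1)
          have hdisj : Disjoint A (D.BI (t+1)) := by
            rw [Finset.disjoint_left]
            intro a ha ha'
            have h1' := hShole a ha
            rw [hmPR1] at h1'
            rw [hBIeq, Finset.mem_Icc] at ha'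
            omega
          refine ⟨A ∪ D.BI (t+1), Finset.union_subset hAf hfree, ?_, ?_⟩
          · intro a ha
            rcases Finset.mem_union.mp ha with ha | ha
            · exact le_trans (hAcap a ha) hcapm
            · rw [hBIeq, Finset.mem_Icc] at ha
              omega
          · refine Or.inr (Or.inr (Or.inr (Or.inl ⟨he1, by omega, hb.2, hact, hmB,
              Finset.subset_union_right, ?_, ?_⟩)))
            · have hAsub : A ⊆ (A ∪ D.BI (t+1)) \ D.BI (t+1) := by
                intro a ha
                rw [Finset.mem_sdiff]
                exact ⟨Finset.mem_union_left _ ha, Finset.disjoint_left.mp hdisj ha⟩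
              rw [show t+1-1 = t from by ring]
              exact le_trans hSM (sub_card_le hAsub)
            · intro a ha
              rcases Finset.mem_union.mp ha with ha | ha
              · exact Or.inl (lt_of_lt_of_le (hShole a ha) hmono)
              · exact Or.inr ha
        · -- mode W
          obtain ⟨x, hxmem⟩ := Finset.nonempty_iff_ne_empty.mpr hmR
          obtain ⟨y, hymem⟩ := Finset.nonempty_iff_ne_empty.mpr hmB
          have hxB := (Finset.mem_inter.mp hxmem).1
          have hxRImem := (Finset.mem_inter.mp hxmem).2
          have hyR := (Finset.mem_inter.mp hymem).1
          have hyBImem := (Finset.mem_inter.mp hymem).2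
          have hxRI : S.s t ≤ x ∧ x ≤ S.s t + (S.l - D.lo (t+1)) - 1 := by
            rw [RI_even D he1, show t+1-1 = t from by ring, Finset.mem_Icc] at hxRImem
            exact hxRImem
          have hyBI : S.s (t+1) - D.hi (t+1) + 1 ≤ y ∧ y ≤ S.s (t+1) := by
            rw [BI_even D he1, Finset.mem_Icc] at hyBImem
            exact hyBImem
          have hhile := hi_le D (t+1)
          have hxnB : x ∉ D.BI (t+1) := fun hxBI =>
            (not_mem_of_inter_empty (b3B D hrig hb.1 hb.2) hxBI) hxB
          have hxy : x < y := by
            by_contra hcon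
            apply hxnB
            rw [BI_even D he1, Finset.mem_Icc]
            omega
          obtain ⟨z, hz1, hz2, hWfree, hWcard⟩ := window D hrig hxB hyR hxy
          have hact2 : ¬ (D.X (t+1+1)).Nonempty := by
            intro hcon
            exact hmB (nest2 D hrig he1 hcon)
          have hlo2 : D.lo (t+2) = S.l := by
            have := (inact D (i := t+2) (by rw [show t+2 = t+1+1 from by ring]; exact hact2)).1
            exact this
          have hdisj : Disjoint A (Finset.Icc z (z + S.l - 2)) := by
            rw [Finset.disjoint_left]
            intro a ha ha'
            have h1' := hShole a ha
            rw [hmPR1] at h1'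
            rw [Finset.mem_Icc] at ha'
            omega
          have hm1l := m_le_l1 D (t+1)
          refine ⟨A ∪ Finset.Icc z (z + S.l - 2), Finset.union_subset hAf hWfree, ?_, ?_⟩
          · intro a ha
            rcases Finset.mem_union.mp ha with ha | ha
            · exact le_trans (hAcap a ha) hcapm
            · rw [Finset.mem_Icc] at ha
              omega
          · refine Or.inr (Or.inl ⟨?_, ?_⟩)
            · rw [hMrec]
              exact le_trans (by omega) (union_card_ge hdisj hSM (le_of_eq hWcard.symm))
            · intro a ha
              have hm2 : mPR D (t+1+1) = S.s (t+1) - (S.l - D.lo (t+2)) + 1 := by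
                rw [show t+1+1 = t+2 from by ring, mPR_odd D
                  (by rcases hto with ⟨k, hk⟩; exact ⟨k+1, by omega⟩),
                  show t+2-1 = t+1 from by ring]
              rcases Finset.mem_union.mp ha with ha | ha
              · exact lt_of_lt_of_le (hShole a ha) hmono
              · rw [Finset.mem_Icc] at ha
                rw [hm2, hlo2]
                omega
    · -- t+1 inactive
      have hm0 : D.m (t+1) = 0 := (inact D hact).2.2
      exact ⟨A, hAf, fun a ha => le_trans (hAcap a ha) hcapm,
        Or.inr (Or.inl ⟨by omega, fun a ha => lt_of_le_of_lt (hAcap a ha) hclt⟩)⟩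
  · exact absurd hZR.1 (Int.not_even_iff_odd.mpr hto)
  · exact absurd hZB.1 (Int.not_even_iff_odd.mpr hto)
  · -- PB state
    obtain ⟨_, h2t, hpt, hactt, hPBM, hPBhole⟩ := hPB
    have hPBIt : PBI D t = Finset.Icc (S.s t + (S.l - D.lo (t+1))) (S.s t + D.hi t - 1) :=
      PBI_eq D t
    by_cases hact : (D.X (t+1)).Nonempty
    · have hb := act_bounds D hact
      have hmR : D.B ∩ D.RI (t+1) = ∅ := nest1 D hrig hto hactt hact
      have hRIeq : D.RI (t+1) = Finset.Icc (S.s t) (S.s t + (S.l - D.lo (t+1)) - 1) := by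
        rw [RI_even D he1, show t+1-1 = t from by ring]
      have hfree := RIe_free D hrig he1 hb.1 hb.2 hmR
      have hdisj : Disjoint A (D.RI (t+1)) := by
        rw [Finset.disjoint_left]
        intro a ha ha'
        rcases hPBhole a ha with h' | h'
        · rw [hmPR1] at h'
          rw [hRIeq, Finset.mem_Icc] at ha'
          omega
        · rw [hPBIt, Finset.mem_Icc] at h'
          rw [hRIeq, Finset.mem_Icc] at ha'
          omega
      refine ⟨A ∪ D.RI (t+1), Finset.union_subset hAf hfree, ?_, ?_⟩
      · intro a ha
        rcases Finset.mem_union.mp ha with ha | ha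
        · exact le_trans (hAcap a ha) hcapm
        · rw [hRIeq, Finset.mem_Icc] at ha
          omega
      · refine Or.inr (Or.inr (Or.inl ⟨he1, by omega, hb.2, hact, hmR,
          Finset.subset_union_right, ?_, ?_⟩))
        · have hAsub : A ⊆ (A ∪ D.RI (t+1)) \ D.RI (t+1) := by
            intro a ha
            rw [Finset.mem_sdiff]
            exact ⟨Finset.mem_union_left _ ha, Finset.disjoint_left.mp hdisj ha⟩
          rw [show t+1-1 = t from by ring]
          exact le_trans hPBM (sub_card_le hAsub)
        · intro a ha
          rcases Finset.mem_union.mp ha with ha | ha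
          · rcases hPBhole a ha with h' | h'
            · exact Or.inl h'
            · exact Or.inr (Or.inl (by rw [show t+1-1 = t from by ring]; exact h'))
          · exact Or.inr (Or.inr ha)
    · have hm0 : D.m (t+1) = 0 := (inact D hact).2.2
      exact ⟨A, hAf, fun a ha => le_trans (hAcap a ha) hcapm,
        Or.inr (Or.inl ⟨by omega, fun a ha => lt_of_le_of_lt (hAcap a ha) hclt⟩)⟩

end S12

namespace S12
open Finset
variable {S : NakSetup} (D : CDatum S)

lemma stepEven (hrig : D.Rigid) {t : ℤ} (hte : Even t) (h1 : 1 ≤ t) (hp : t + 1 ≤ S.p)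
    (hG : GOOD D t) : GOOD D (t+1) := by
  obtain ⟨A, hAf, hAcap, hstate⟩ := hG
  have h2t : 2 ≤ t := by rcases hte with ⟨k, hk⟩; omega
  have ho1 : Odd (t+1) := Even.add_one hte
  have hot1 : Odd (t-1) := by rcases hte with ⟨k, hk⟩; exact ⟨k-1, by omega⟩
  have he2 : Even (t+2) := by rcases hte with ⟨k, hk⟩; exact ⟨k+1, by omega⟩
  have hcapm := capB_mono D h1 hp
  have hclt : capB D t < mPR D (t+1+1) := by
    rw [show t+1+1 = t+2 from by ring]; exact capB_lt D hrig h1 hp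
  have hMrec : Msum D (t+1) = Msum D t + D.m (t+1) := Msum_rec D h1
  have hMrec2 : Msum D (t+1+1) = Msum D (t+1) + D.m (t+2) := by
    have := Msum_rec D (t := t+1) (by omega)
    rw [show t+1+1 = t+2 from by ring] at this ⊢
    exact this
  have hMrec0 : Msum D t = Msum D (t-1) + D.m t := by
    have := Msum_rec D (t := t-1) (by omega)
    rw [show t-1+1 = t from by ring] at this
    exact this
  have hm1nn := m_nonneg D (t+1)
  have hm2nn := m_nonneg D (t+2)
  have hcapt : capB D t = S.s t := capB_even D hte
  have hcapt1 : capB D (t+1) = S.s (t+1) + D.hi (t+1) - 1 := capB_odd D ho1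
  have hmPR1 : mPR D (t+1) = S.s t - (S.l - D.lo (t+1)) + 1 := by
    rw [mPR_odd D ho1, show t+1-1 = t from by ring]
  have hmPR2 : mPR D (t+1+1) = S.s (t+1) := by
    rw [show t+1+1 = t+2 from by ring, mPR_even D he2, show t+2-1 = t+1 from by ring]
  have hgap := gapOdd (S := S) (j := t-1) hot1 (by omega) (by omega)
  rw [show t - 1 + 1 = t from by ring] at hgap
  have hstept := s_step (S := S) h1 hp
  have hl := S.hl; have hd := S.hd
  have hwl : S.l ≤ S.s t - S.s (t-1) := by nlinarith
  have hhit := hi_le D t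
  have hhit0 := hi_nonneg D t
  have hhit1 := hi_le D (t+1)
  have hhit10 := hi_nonneg D (t+1)
  have hhitm1 := hi_le D (t-1)
  have hhitm10 := hi_nonneg D (t-1)
  have hlo1 := lo_ge_one D (t+1)
  have hlol1 := lo_le_l D (t+1)
  have hlo0 := lo_ge_one D t
  have hlol0 := lo_le_l D t
  have hlo2 := lo_ge_one D (t+2)
  have hlol2 := lo_le_l D (t+2)
  -- per-state |A| ≥ Msum t
  have hMA : Msum D t ≤ (A.card : ℤ) := by
    rcases hstate with hP | hS | hZR | hZB | hPB
    · exact absurd hP.1 (Int.not_odd_iff_even.mpr hte)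
    · exact hS.1
    · obtain ⟨_, _, _, hactt, _, hsub, hM, _⟩ := hZR
      have hc := card_RI_even D hte
      have := m_le_lminuslo D t
      have heq := Finset.card_sdiff_add_card_eq_card hsub
      have : ((A \ D.RI t).card : ℤ) + ((D.RI t).card : ℤ) = (A.card : ℤ) := by
        exact_mod_cast congrArg Nat.cast heq
      omega
    · obtain ⟨_, _, _, hactt, _, hsub, hM, _⟩ := hZB
      have hc := card_BI_even D hte
      have := m_le_hi D t
      have heq := Finset.card_sdiff_add_card_eq_card hsub
      have : ((A \ D.BI t).card : ℤ) + ((D.BI t).card : ℤ) = (A.card : ℤ) := by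
        exact_mod_cast congrArg Nat.cast heq
      omega
    · exact absurd hPB.1 (Int.not_odd_iff_even.mpr hte)
  by_cases hact : (D.X (t+1)).Nonempty
  swap
  · -- t+1 inactive
    have hm0 : D.m (t+1) = 0 := (inact D hact).2.2
    exact ⟨A, hAf, fun a ha => le_trans (hAcap a ha) hcapm,
      Or.inr (Or.inl ⟨by omega, fun a ha => lt_of_le_of_lt (hAcap a ha) hclt⟩)⟩
  · have hb := act_bounds D hact
    have hsize1 : D.m (t+1) ≤ (S.l - D.lo (t+1)) - D.hi t := by
      have := sizePRI D hrig ho1 hb.1 hb.2 hact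
      rw [show t+1-1 = t from by ring] at this
      exact this
    have hm1pos := m_pos D hact
    have hPRIeq : PRI D (t+1) =
        Finset.Icc (S.s t - (S.l - D.lo (t+1)) + 1) (S.s t - D.hi t) := PRI_eq D t
    have hPBIeq : PBI D (t+1) =
        Finset.Icc (S.s (t+1) + (S.l - D.lo (t+2))) (S.s (t+1) + D.hi (t+1) - 1) := by
      rw [PBI_eq, show t+1+1 = t+2 from by ring]
    have hsizeB : D.m (t+1) ≤ D.hi (t+1) - (S.l - D.lo (t+2)) := by
      have := sizePBI D hrig ho1 hb.1 hb.2 hact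
      rw [show t+1+1 = t+2 from by ring] at this
      exact this
    have hcardPRI : ((PRI D (t+1)).card : ℤ) = (S.l - D.lo (t+1)) - D.hi t := by
      rw [hPRIeq, cardIcc _ _ (by omega)]; ring
    have hcardPBI : ((PBI D (t+1)).card : ℤ) = D.hi (t+1) - (S.l - D.lo (t+2)) := by
      rw [hPBIeq, cardIcc _ _ (by omega)]; ring
    by_cases hmR : D.B ∩ PRI D (t+1) = ∅
    · -- mode R
      have hfree := PRIo_free D hrig ho1 h2t hp hmR
      rcases hstate with hP | hS | hZR | hZB | hPB
      · exact absurd hP.1 (Int.not_odd_iff_even.mpr hte)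
      · -- S state
        obtain ⟨hSM, hShole⟩ := hS
        have hdisj : Disjoint A (PRI D (t+1)) := by
          rw [Finset.disjoint_left]
          intro a ha ha'
          have h' := hShole a ha
          rw [hmPR1] at h'
          rw [hPRIeq, Finset.mem_Icc] at ha'
          omega
        refine ⟨A ∪ PRI D (t+1), Finset.union_subset hAf hfree, ?_, ?_⟩
        · intro a ha
          rcases Finset.mem_union.mp ha with ha | ha
          · exact le_trans (hAcap a ha) hcapm
          · rw [hPRIeq, Finset.mem_Icc] at ha
            omega
        · refine Or.inr (Or.inl ⟨?_, ?_⟩)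
          · rw [hMrec]
            exact union_card_ge hdisj hSM (by omega)
          · intro a ha
            rcases Finset.mem_union.mp ha with ha | ha
            · exact lt_of_lt_of_le (hShole a ha) (mPR_mono D hb.1 hb.2)
            · rw [hPRIeq, Finset.mem_Icc] at ha
              rw [hmPR2]
              omega
      · -- ZR state
        obtain ⟨_, _, hpt, hactt, hBRIt, hsubRI, hMZR, hZRhole⟩ := hZR
        have hRIt : D.RI t = Finset.Icc (S.s (t-1)) (S.s (t-1) + (S.l - D.lo t) - 1) :=
          RI_even D hte
        have hPBIt1 : PBI D (t-1) =
            Finset.Icc (S.s (t-1) + (S.l - D.lo t)) (S.s (t-1) + D.hi (t-1) - 1) := by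
          rw [PBI_eq, show t-1+1 = t from by ring]
        have hmPRt : mPR D t = S.s (t-1) := mPR_even D hte
        have hL13 : D.hi (t-1) + (S.l - D.lo (t+1)) ≤ (S.s t - S.s (t-1)) + 1 := by
          have := L13odd D hrig (j := t-1) hot1 (by omega) (by omega)
          rw [show t-1+2 = t+1 from by ring, show t-1+1 = t from by ring] at this
          exact this
        have hdisj : Disjoint (A \ D.RI t) (D.RI t ∪ PRI D (t+1)) := by
          rw [Finset.disjoint_left]
          intro a ha hu
          rw [Finset.mem_sdiff] at ha
          rcases hZRhole a ha.1 with h' | h' | h'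
          · rw [hmPRt] at h'
            rcases Finset.mem_union.mp hu with hu | hu
            · rw [hRIt, Finset.mem_Icc] at hu; omega
            · rw [hPRIeq, Finset.mem_Icc] at hu; omega
          · rw [hPBIt1, Finset.mem_Icc] at h'
            rcases Finset.mem_union.mp hu with hu | hu
            · rw [hRIt, Finset.mem_Icc] at hu; omega
            · rw [hPRIeq, Finset.mem_Icc] at hu; omega
          · exact ha.2 h'
        have hP1 := P1union D hrig hte h2t hp hactt hact
        have hUfree : D.RI t ∪ PRI D (t+1) ⊆ Free D :=
          Finset.union_subset (RIe_free D hrig hte h2t (by omega) hBRIt) hfree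
        refine ⟨(A \ D.RI t) ∪ (D.RI t ∪ PRI D (t+1)),
          Finset.union_subset (fun a ha => hAf (Finset.mem_sdiff.mp ha).1) hUfree, ?_, ?_⟩
        · intro a ha
          rcases Finset.mem_union.mp ha with ha | ha
          · exact le_trans (hAcap a (Finset.mem_sdiff.mp ha).1) hcapm
          · rcases Finset.mem_union.mp ha with ha | ha
            · rw [hRIt, Finset.mem_Icc] at ha
              omega
            · rw [hPRIeq, Finset.mem_Icc] at ha
              omega
        · refine Or.inr (Or.inl ⟨?_, ?_⟩)
          · rw [hMrec, hMrec0]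
            have := union_card_ge hdisj hMZR hP1
            omega
          · intro a ha
            rw [hmPR2]
            rcases Finset.mem_union.mp ha with ha | ha
            · rcases hZRhole a (Finset.mem_sdiff.mp ha).1 with h' | h' | h'
              · rw [hmPRt] at h'; omega
              · rw [hPBIt1, Finset.mem_Icc] at h'; omega
              · exact absurd h' (Finset.mem_sdiff.mp ha).2
            · rcases Finset.mem_union.mp ha with ha | ha
              · rw [hRIt, Finset.mem_Icc] at ha; omega
              · rw [hPRIeq, Finset.mem_Icc] at ha; omega
      · -- ZB state
        obtain ⟨_, _, hpt, hactt, hRBIt, hsubBI, hMZB, hZBhole⟩ := hZB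
        have hBIt : D.BI t = Finset.Icc (S.s t - D.hi t + 1) (S.s t) := BI_even D hte
        have hdisj : Disjoint A (PRI D (t+1)) := by
          rw [Finset.disjoint_left]
          intro a ha ha'
          rw [hPRIeq, Finset.mem_Icc] at ha'
          rcases hZBhole a ha with h' | h'
          · rw [hmPR1] at h'; omega
          · rw [hBIt, Finset.mem_Icc] at h'; omega
        have hMA' : Msum D t ≤ (A.card : ℤ) := hMA
        refine ⟨A ∪ PRI D (t+1), Finset.union_subset hAf hfree, ?_, ?_⟩
        · intro a ha
          rcases Finset.mem_union.mp ha with ha | ha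
          · exact le_trans (hAcap a ha) hcapm
          · rw [hPRIeq, Finset.mem_Icc] at ha
            omega
        · refine Or.inr (Or.inl ⟨?_, ?_⟩)
          · rw [hMrec]
            exact union_card_ge hdisj hMA' (by omega)
          · intro a ha
            rw [hmPR2]
            rcases Finset.mem_union.mp ha with ha | ha
            · rcases hZBhole a ha with h' | h'
              · rw [hmPR1] at h'; omega
              · rw [hBIt, Finset.mem_Icc] at h'; omega
            · rw [hPRIeq, Finset.mem_Icc] at ha; omega
      · exact absurd hPB.1 (Int.not_odd_iff_even.mpr hte)
    · by_cases hmB : D.R ∩ PBI D (t+1) = ∅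
      · -- mode B : emit PB state
        have hfree := PBIo_free D hrig ho1 hb.1 hb.2 hmB
        have hdisj : Disjoint A (PBI D (t+1)) := by
          rw [Finset.disjoint_left]
          intro a ha ha'
          have := hAcap a ha
          rw [hcapt] at this
          rw [hPBIeq, Finset.mem_Icc] at ha'
          omega
        refine ⟨A ∪ PBI D (t+1), Finset.union_subset hAf hfree, ?_, ?_⟩
        · intro a ha
          rcases Finset.mem_union.mp ha with ha | ha
          · exact le_trans (hAcap a ha) hcapm
          · rw [hPBIeq, Finset.mem_Icc] at ha
            omega
        · refine Or.inr (Or.inr (Or.inr (Or.inr ⟨ho1, hb.1, hb.2, hact, ?_, ?_⟩)))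
          · rw [hMrec]
            exact union_card_ge hdisj hMA (by omega)
          · intro a ha
            rcases Finset.mem_union.mp ha with ha | ha
            · refine Or.inl ?_
              rw [hmPR2]
              have := hAcap a ha
              rw [hcapt] at this
              omega
            · exact Or.inr ha
      · -- mode W
        obtain ⟨x, hxmem⟩ := Finset.nonempty_iff_ne_empty.mpr hmR
        obtain ⟨y, hymem⟩ := Finset.nonempty_iff_ne_empty.mpr hmB
        have hxB := (Finset.mem_inter.mp hxmem).1
        have hxP := (Finset.mem_inter.mp hxmem).2
        have hyR := (Finset.mem_inter.mp hymem).1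
        have hyP := (Finset.mem_inter.mp hymem).2
        rw [hPRIeq, Finset.mem_Icc] at hxP
        rw [hPBIeq, Finset.mem_Icc] at hyP
        have hxy : x < y := by omega
        obtain ⟨z, hz1, hz2, hWfree, hWcard⟩ := window D hrig hxB hyR hxy
        have hpair : D.m (t+1) + D.m (t+2) ≤ S.l - 1 := by
          have := pair_odd D hrig ho1 hb.1 hb.2
          rw [show t+1+1 = t+2 from by ring] at this
          exact this
        rcases hstate with hP | hS | hZR | hZB | hPB
        · exact absurd hP.1 (Int.not_odd_iff_even.mpr hte)
        · -- S state
          obtain ⟨hSM, hShole⟩ := hS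
          have hdisj : Disjoint A (Finset.Icc z (z + S.l - 2)) := by
            rw [Finset.disjoint_left]
            intro a ha ha'
            have h' := hShole a ha
            rw [hmPR1] at h'
            rw [Finset.mem_Icc] at ha'
            omega
          refine ⟨A ∪ Finset.Icc z (z + S.l - 2), Finset.union_subset hAf hWfree, ?_, ?_⟩
          · intro a ha
            rcases Finset.mem_union.mp ha with ha | ha
            · exact le_trans (hAcap a ha) hcapm
            · rw [Finset.mem_Icc] at ha
              omega
          · refine Or.inl ⟨ho1, ?_⟩
            rw [hMrec2, hMrec]
            have := union_card_ge hdisj hSM (le_of_eq hWcard.symm)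
            omega
        · -- ZR state
          obtain ⟨_, _, hpt, hactt, hBRIt, hsubRI, hMZR, hZRhole⟩ := hZR
          have hRIt : D.RI t = Finset.Icc (S.s (t-1)) (S.s (t-1) + (S.l - D.lo t) - 1) :=
            RI_even D hte
          have hPBIt1 : PBI D (t-1) =
              Finset.Icc (S.s (t-1) + (S.l - D.lo t)) (S.s (t-1) + D.hi (t-1) - 1) := by
            rw [PBI_eq, show t-1+1 = t from by ring]
          have hmPRt : mPR D t = S.s (t-1) := mPR_even D hte
          have hL13 : D.hi (t-1) + (S.l - D.lo (t+1)) ≤ (S.s t - S.s (t-1)) + 1 := by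
            have := L13odd D hrig (j := t-1) hot1 (by omega) (by omega)
            rw [show t-1+2 = t+1 from by ring, show t-1+1 = t from by ring] at this
            exact this
          have hxnRI : x ∉ D.RI t := fun hxRI =>
            (not_mem_of_inter_empty hBRIt hxRI) hxB
          have hxgt : S.s (t-1) + (S.l - D.lo t) - 1 < x := by
            by_contra hcon
            apply hxnRI
            rw [hRIt, Finset.mem_Icc]
            omega
          have hdisj : Disjoint A (Finset.Icc z (z + S.l - 2)) := by
            rw [Finset.disjoint_left]
            intro a ha ha'
            rw [Finset.mem_Icc] at ha'
            rcases hZRhole a ha with h' | h' | h'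
            · rw [hmPRt] at h'; omega
            · rw [hPBIt1, Finset.mem_Icc] at h'; omega
            · rw [hRIt, Finset.mem_Icc] at h'; omega
          have hMA' : Msum D t ≤ (A.card : ℤ) := hMA
          refine ⟨A ∪ Finset.Icc z (z + S.l - 2), Finset.union_subset hAf hWfree, ?_, ?_⟩
          · intro a ha
            rcases Finset.mem_union.mp ha with ha | ha
            · exact le_trans (hAcap a ha) hcapm
            · rw [Finset.mem_Icc] at ha
              omega
          · refine Or.inl ⟨ho1, ?_⟩
            rw [hMrec2, hMrec]
            have := union_card_ge hdisj hMA' (le_of_eq hWcard.symm)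
            omega
        · -- ZB state
          obtain ⟨_, _, hpt, hactt, hRBIt, hsubBI, hMZB, hZBhole⟩ := hZB
          have hBIt : D.BI t = Finset.Icc (S.s t - D.hi t + 1) (S.s t) := BI_even D hte
          have htriple := triple D hrig hte h2t (by omega) hactt hact
          have hdisj : Disjoint (A \ D.BI t) (Finset.Icc z (z + S.l - 2)) := by
            rw [Finset.disjoint_left]
            intro a ha ha'
            rw [Finset.mem_sdiff] at ha
            rw [Finset.mem_Icc] at ha'
            rcases hZBhole a ha.1 with h' | h'
            · rw [hmPR1] at h'; omega
            · exact ha.2 h'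
          refine ⟨(A \ D.BI t) ∪ Finset.Icc z (z + S.l - 2),
            Finset.union_subset (fun a ha => hAf (Finset.mem_sdiff.mp ha).1) hWfree, ?_, ?_⟩
          · intro a ha
            rcases Finset.mem_union.mp ha with ha | ha
            · exact le_trans (hAcap a (Finset.mem_sdiff.mp ha).1) hcapm
            · rw [Finset.mem_Icc] at ha
              omega
          · refine Or.inl ⟨ho1, ?_⟩
            rw [hMrec2, hMrec, hMrec0]
            have := union_card_ge hdisj hMZB (le_of_eq hWcard.symm)
            omega
        · exact absurd hPB.1 (Int.not_odd_iff_even.mpr hte)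

end S12

namespace S12
open Finset
variable {S : NakSetup} (D : CDatum S)

lemma base : GOOD D 1 := by
  refine ⟨∅, Finset.empty_subset _, by simp, Or.inr (Or.inl ⟨?_, by simp⟩)⟩
  rw [Msum_one]
  simp

lemma good_all (hrig : D.Rigid) : ∀ t, 1 ≤ t → t ≤ S.p → GOOD D t := by
  intro t ht
  have key := Int.le_induction (m := 1) (motive := fun c _ => c ≤ S.p → GOOD D c)
    (fun _ => base D)
    (fun k hk ih hkp => by
      have hGk := ih (by omega)
      rcases Int.even_or_odd k with he | ho
      · exact stepEven D hrig he hk hkp hGk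
      · exact stepOdd D hrig ho hk hkp hGk)
  exact key t ht

lemma good_card (hrig : D.Rigid) (hG : GOOD D S.p) : Msum D S.p ≤ ((Free D).card : ℤ) := by
  obtain ⟨A, hAf, _, hstate⟩ := hG
  have hkey : Msum D S.p ≤ (A.card : ℤ) := by
    rcases hstate with hP | hS | hZR | hZB | hPB
    · have hMrec := Msum_rec D (t := S.p) S.hp
      have hm0 : D.m (S.p + 1) = 0 := m_zero_out D (by omega)
      omega
    · exact hS.1
    · obtain ⟨hev, _, _, hactt, _, hsub, hM, _⟩ := hZR
      have hc := card_RI_even D hev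
      have := m_le_lminuslo D S.p
      have hMrec : Msum D S.p = Msum D (S.p - 1) + D.m S.p := by
        have := Msum_rec D (t := S.p - 1) (by have := S.hp; omega)
        rw [show S.p - 1 + 1 = S.p from by ring] at this
        exact this
      have heq := Finset.card_sdiff_add_card_eq_card hsub
      have : ((A \ D.RI S.p).card : ℤ) + ((D.RI S.p).card : ℤ) = (A.card : ℤ) := by
        exact_mod_cast congrArg Nat.cast heq
      omega
    · obtain ⟨hev, _, _, hactt, _, hsub, hM, _⟩ := hZB
      have hc := card_BI_even D hev
      have := m_le_hi D S.p
      have hMrec : Msum D S.p = Msum D (S.p - 1) + D.m S.p := by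
        have := Msum_rec D (t := S.p - 1) (by have := S.hp; omega)
        rw [show S.p - 1 + 1 = S.p from by ring] at this
        exact this
      have heq := Finset.card_sdiff_add_card_eq_card hsub
      have : ((A \ D.BI S.p).card : ℤ) + ((D.BI S.p).card : ℤ) = (A.card : ℤ) := by
        exact_mod_cast congrArg Nat.cast heq
      omega
    · exact hPB.2.2.2.2.1
  exact le_trans hkey (sub_card_le hAf)

end S12



/-- a rigid `C`-datum has summand count at most `n`. -/
theorem stmt12 {S : NakSetup} (D : CDatum S) (hrig : D.Rigid) :
    D.count ≤ S.n := by
  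
  have hGp := S12.good_all D hrig S.p S.hp le_rfl
  have hMp := S12.good_card D hrig hGp
  have hfc := S12.free_card D
  have : D.count = (D.R.card : ℤ) + (D.B.card : ℤ) + S12.Msum D S.p := rfl
  rw [this]
  omega
end

section
/- Let Γ = Γ¹ ⊔ Γ² be a finite set written as a disjoint union, and let Ψ = Ψ¹ ∪ Ψ² be a set of subsets of Γ, where every element of Ψ¹ is a subset of Γ¹. If Ψ¹ is a reducing set of Γ¹ and {ξ ∩ Γ² : ξ ∈ Ψ²} is a reducing set of Γ², then Ψ is a reducing set of Γ. -/
variable {α : Type*} [DecidableEq α]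

/-- One step of the reduction: remove `a` from every member of `Ψ`. -/
def reduceStep (a : α) (Ψ : Set (Finset α)) : Set (Finset α) :=
  (fun χ => χ.erase a) '' Ψ

/-- `ReducingChain L Ψ` says that, processing the elements of `L` in order,
at each step the singleton of the current element belongs to the current
(iteratively reduced) family. -/
def ReducingChain : List α → Set (Finset α) → Prop
  | [], _ => True
  | a :: rest, Ψ => ({a} : Finset α) ∈ Ψ ∧ ReducingChain rest (reduceStep a Ψ)

/-- `Ψ` is a reducing set of the finite set `Γ`: the elements of `Γ` can be ordered
`α_0, …, α_k` so that `{α_i} ∈ Ψ_i` for all `i`, where `Ψ_0 = Ψ` and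
`Ψ_{i+1} = {χ \ {α_i} : χ ∈ Ψ_i}`. -/
def IsReducingSet (Γ : Finset α) (Ψ : Set (Finset α)) : Prop :=
  ∃ L : List α, L.Nodup ∧ L.toFinset = Γ ∧ ReducingChain L Ψ

lemma chain_mono : ∀ (L : List α) {Ψ Ψ' : Set (Finset α)}, Ψ ⊆ Ψ' →
    ReducingChain L Ψ → ReducingChain L Ψ'
  | [], _, _, _, _ => trivial
  | a :: rest, Ψ, Ψ', h, ⟨h1, h2⟩ =>
    ⟨h h1, chain_mono rest (Set.image_mono h) h2⟩

/-- Iterated reduction. -/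
def reduceList (L : List α) (Ψ : Set (Finset α)) : Set (Finset α) :=
  L.foldl (fun Ψ a => reduceStep a Ψ) Ψ

lemma chain_append : ∀ (L₁ L₂ : List α) (Ψ : Set (Finset α)),
    ReducingChain L₁ Ψ → ReducingChain L₂ (reduceList L₁ Ψ) →
    ReducingChain (L₁ ++ L₂) Ψ
  | [], _, _, _, h2 => h2
  | a :: rest, L₂, Ψ, ⟨h1, h1'⟩, h2 => ⟨h1, chain_append rest L₂ _ h1' h2⟩

lemma reduceList_eq : ∀ (L : List α) (Ψ : Set (Finset α)),
    reduceList L Ψ = (fun χ => χ \ L.toFinset) '' Ψ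
  | [], Ψ => by simp [reduceList]
  | a :: rest, Ψ => by
    show reduceList rest (reduceStep a Ψ) = _
    rw [reduceList_eq rest, reduceStep, Set.image_image]
    apply Set.image_congr'
    intro χ
    ext x
    simp [Finset.mem_erase]
    tauto

/-- if `Γ = Γ¹ ⊔ Γ²`, `Ψ = Ψ¹ ∪ Ψ²` is a set of subsets of `Γ` with
every member of `Ψ¹` a subset of `Γ¹`, `Ψ¹` is a reducing set of `Γ¹`, and
`{ξ ∩ Γ² : ξ ∈ Ψ²}` is a reducing set of `Γ²`, then `Ψ` is a reducing set of `Γ`. -/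
theorem stmt14 (Γ Γ₁ Γ₂ : Finset α) (Ψ Ψ₁ Ψ₂ : Set (Finset α))
    (hΓ : Γ = Γ₁ ∪ Γ₂) (hdisj : Disjoint Γ₁ Γ₂)
    (hΨ : Ψ = Ψ₁ ∪ Ψ₂) (hΨsub : ∀ χ ∈ Ψ, χ ⊆ Γ) (hΨ₁sub : ∀ χ ∈ Ψ₁, χ ⊆ Γ₁)
    (h1 : IsReducingSet Γ₁ Ψ₁)
    (h2 : IsReducingSet Γ₂ ((fun ξ => ξ ∩ Γ₂) '' Ψ₂)) :
    IsReducingSet Γ Ψ := by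
  obtain ⟨L₁, hnd₁, hfin₁, hc₁⟩ := h1
  obtain ⟨L₂, hnd₂, hfin₂, hc₂⟩ := h2
  refine ⟨L₁ ++ L₂, ?_, ?_, ?_⟩
  · rw [List.nodup_append]
    refine ⟨hnd₁, hnd₂, fun a ha b hb hab => ?_⟩
    exact (Finset.disjoint_left.mp hdisj (hfin₁ ▸ List.mem_toFinset.mpr ha))
      (hfin₂ ▸ List.mem_toFinset.mpr (hab ▸ hb : a ∈ L₂))
  · simp [hΓ, ← hfin₁, ← hfin₂]
  · apply chain_append
    · exact chain_mono L₁ (hΨ ▸ Set.subset_union_left) hc₁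
    · refine chain_mono L₂ ?_ hc₂
      rw [reduceList_eq, hfin₁]
      rintro _ ⟨ξ, hξ, rfl⟩
      refine ⟨ξ, hΨ ▸ Set.mem_union_right _ hξ, ?_⟩
      have hsub : ξ ⊆ Γ₁ ∪ Γ₂ := hΓ ▸ hΨsub ξ (hΨ ▸ Set.mem_union_right _ hξ)
      ext x
      simp only [Finset.mem_inter, Finset.mem_sdiff]
      constructor
      · rintro ⟨hx, hx2⟩
        exact ⟨hx, (Finset.mem_union.mp (hsub hx)).resolve_left hx2⟩
      · rintro ⟨hx, hx2⟩
        exact ⟨hx, Finset.disjoint_right.mp hdisj hx2⟩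
end
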